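/- arXiv:1005.0768 — 9 statements merged into one kernel-verified Lean document; each statement's English description precedes it below -/
import Mathlib

section
/- Every solution of the liquidation value system is nonnegative; that is, if (r¹,…,r^m,s) ∈ (ℝ^n)^{m+1} satisfies the liquidation value system, then rⁱ ≥ 0 componentwise for every i = 1,…,m and s ≥ 0 componentwise. -/
open Matrix Finset Filter

noncomputable section

/-- Componentwise minimum of two vectors in ℝ^n. -/
def vmin {n : ℕ} (x y : Fin n → ℝ) : Fin n → ℝ := fun k => min (x k) (y k)

/-- Componentwise positive part of a vector in ℝ^n. -/
def vpos {n : ℕ} (x : Fin n → ℝ) : Fin n → ℝ := fun k => max (x k) 0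

/-- ℓ¹-norm of a vector in ℝ^n. -/
def l1 {n : ℕ} (x : Fin n → ℝ) : ℝ := ∑ k, |x k|

/-- An n×n matrix is strictly left substochastic if all entries are nonnegative
and every column sum is < 1. -/
def StrictlyLeftSubstochastic {n : ℕ} (M : Matrix (Fin n) (Fin n) ℝ) : Prop :=
  (∀ i j, 0 ≤ M i j) ∧ ∀ j, ∑ i, M i j < 1

/-- The liquidation value system: `r j` for `j = 0` is the highest-priority recovery claim,
`s` is equity. -/
def LiqSystem {n m : ℕ} (a : Fin n → ℝ) (Ms : Matrix (Fin n) (Fin n) ℝ)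
    (Md : Fin m → Matrix (Fin n) (Fin n) ℝ)
    (d : Fin m → (Fin m → Fin n → ℝ) → (Fin n → ℝ) → (Fin n → ℝ))
    (r : Fin m → Fin n → ℝ) (s : Fin n → ℝ) : Prop :=
  (∀ j : Fin m, (j : ℕ) = 0 →
    r j = vmin (d j r s) (a + Ms.mulVec s + ∑ i, (Md i).mulVec (r i))) ∧
  (∀ j : Fin m, (j : ℕ) ≠ 0 →
    r j = vmin (d j r s)
      (vpos (a + Ms.mulVec s + ∑ i, (Md i).mulVec (r i) - ∑ i ∈ Finset.Iio j, d i r s))) ∧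
  s = vpos (a + Ms.mulVec s + ∑ i, (Md i).mulVec (r i) - ∑ i, d i r s)

/-- I^max : the maximum column sum over all ownership matrices. -/
def Imax {n m : ℕ} (Ms : Matrix (Fin n) (Fin n) ℝ)
    (Md : Fin m → Matrix (Fin n) (Fin n) ℝ) : ℝ :=
  max (⨆ j, ∑ i, Ms i j) (⨆ l, ⨆ j, ∑ i, (Md l) i j)

/-- Every solution of the liquidation value system is nonnegative. -/
theorem nonneg_of_liqSystem {n m : ℕ} (hn : 0 < n) (hm : 0 < m)
    (a : Fin n → ℝ) (ha : ∀ k, 0 ≤ a k)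
    (Ms : Matrix (Fin n) (Fin n) ℝ) (hMs : StrictlyLeftSubstochastic Ms)
    (Md : Fin m → Matrix (Fin n) (Fin n) ℝ) (hMd : ∀ i, StrictlyLeftSubstochastic (Md i))
    (d : Fin m → (Fin m → Fin n → ℝ) → (Fin n → ℝ) → (Fin n → ℝ))
    (hd : ∀ i r s k, 0 ≤ d i r s k)
    (r : Fin m → Fin n → ℝ) (s : Fin n → ℝ)
    (hsol : LiqSystem a Ms Md d r s) :
    (∀ i k, 0 ≤ r i k) ∧ (∀ k, 0 ≤ s k) := by
  obtain ⟨h0, hne, hs⟩ := hsol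
  have hsk : ∀ k, 0 ≤ s k := by
    intro k
    rw [hs]; exact le_max_right _ _
  have hrne : ∀ j : Fin m, (j : ℕ) ≠ 0 → ∀ k, 0 ≤ r j k := by
    intro j hj k
    rw [hne j hj]
    exact le_min (hd _ _ _ _) (le_max_right _ _)
  set j0 : Fin m := ⟨0, hm⟩ with hj0
  set A : Fin n → ℝ := a + Ms.mulVec s + ∑ i, (Md i).mulVec (r i) with hA
  have hr0eq : ∀ k, r j0 k = min (d j0 r s k) (A k) := by
    intro k; rw [h0 j0 rfl]; rfl
  set v : Fin n → ℝ := fun k => max (-(r j0 k)) 0 with hv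
  have hvnn : ∀ k, 0 ≤ v k := fun k => le_max_right _ _
  have hrv : ∀ k, -(v k) ≤ r j0 k := by
    intro k
    simp only [hv]
    rcases le_or_gt 0 (r j0 k) with h | h
    · have := le_max_right (-(r j0 k)) 0; linarith
    · rw [max_eq_left (by linarith)]; linarith
  have key : ∀ k, v k ≤ ∑ j, Md j0 k j * v j := by
    intro k
    have hsum_nn : 0 ≤ ∑ j, Md j0 k j * v j :=
      Finset.sum_nonneg fun j _ => mul_nonneg ((hMd j0).1 k j) (hvnn j)
    rcases le_or_gt 0 (r j0 k) with h | h
    · have : v k = 0 := max_eq_right (by linarith)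
      linarith
    · have hAk : A k = r j0 k := by
        rcases min_cases (d j0 r s k) (A k) with ⟨he, _⟩ | ⟨he, _⟩
        · have := hd j0 r s k; rw [hr0eq k] at h; linarith [he ▸ h]
        · rw [hr0eq k, he]
      have hvk : v k = -(r j0 k) := max_eq_left (by linarith)
      have hAexp : A k = a k + Ms.mulVec s k + ∑ i, (Md i).mulVec (r i) k := by
        simp [hA, Finset.sum_apply]
      have hMsnn : 0 ≤ Ms.mulVec s k := by
        simp only [Matrix.mulVec, dotProduct]
        exact Finset.sum_nonneg fun j _ => mul_nonneg (hMs.1 k j) (hsk j)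
      have hsplit : ∑ i, (Md i).mulVec (r i) k
          = (Md j0).mulVec (r j0) k + ∑ i ∈ Finset.univ.erase j0, (Md i).mulVec (r i) k :=
        (Finset.add_sum_erase _ _ (Finset.mem_univ j0)).symm
      have hrest : 0 ≤ ∑ i ∈ Finset.univ.erase j0, (Md i).mulVec (r i) k := by
        refine Finset.sum_nonneg fun i hi => ?_
        have hi0 : (i : ℕ) ≠ 0 := by
          intro hc
          exact (Finset.mem_erase.mp hi).1 (Fin.ext hc)
        simp only [Matrix.mulVec, dotProduct]
        exact Finset.sum_nonneg fun j _ => mul_nonneg ((hMd i).1 k j) (hrne i hi0 j)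
      have hj0term : -((Md j0).mulVec (r j0) k) ≤ ∑ j, Md j0 k j * v j := by
        have : ∑ j, Md j0 k j * (-(v j)) ≤ (Md j0).mulVec (r j0) k := by
          simp only [Matrix.mulVec, dotProduct]
          refine Finset.sum_le_sum fun j _ => ?_
          exact mul_le_mul_of_nonneg_left (hrv j) ((hMd j0).1 k j)
        have h2 : ∑ j, Md j0 k j * (-(v j)) = -(∑ j, Md j0 k j * v j) := by
          rw [← Finset.sum_neg_distrib]
          exact Finset.sum_congr rfl fun j _ => by ring
        linarith [h2 ▸ this]
      have : v k = -(A k) := by rw [hvk, hAk]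
      rw [this, hAexp, hsplit]
      have := ha k
      linarith
  have hvzero : ∀ k, v k = 0 := by
    by_contra hc
    push_neg at hc
    obtain ⟨k0, hk0⟩ := hc
    have hk0pos : 0 < v k0 := lt_of_le_of_ne (hvnn k0) (Ne.symm hk0)
    have hS : ∑ k, v k ≤ ∑ j, (∑ k, Md j0 k j) * v j := by
      calc ∑ k, v k ≤ ∑ k, ∑ j, Md j0 k j * v j := Finset.sum_le_sum fun k _ => key k
        _ = ∑ j, ∑ k, Md j0 k j * v j := Finset.sum_comm
        _ = ∑ j, (∑ k, Md j0 k j) * v j := by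
            exact Finset.sum_congr rfl fun j _ => (Finset.sum_mul _ _ _).symm
    have hS2 : ∑ j, (∑ k, Md j0 k j) * v j < ∑ j, v j := by
      refine Finset.sum_lt_sum (fun j _ => ?_) ⟨k0, Finset.mem_univ k0, ?_⟩
      · nlinarith [(hMd j0).2 j, hvnn j]
      · nlinarith [(hMd j0).2 k0]
    linarith
  have hr0 : ∀ k, 0 ≤ r j0 k := by
    intro k
    have := hrv k
    rw [hvzero k] at this
    linarith
  refine ⟨fun i k => ?_, hsk⟩
  by_cases hi : (i : ℕ) = 0
  · have : i = j0 := Fin.ext hi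
    rw [this]; exact hr0 k
  · exact hrne i hi k
end
end

section
/- Every solution of the liquidation value system satisfies the accounting equation componentwise: if (r¹,…,r^m,s) solves the system, then a + Mˢ·s + Σ_{i=1}^m M^{d,i}·rⁱ = s + Σ_{i=1}^m rⁱ (equality of vectors in ℝ^n). -/
open Matrix Finset Filter

noncomputable section

/-- Accounting equation: assets + receivables = equity + payable liabilities, per firm. -/
theorem accounting_equation {n m : ℕ} (hn : 0 < n) (hm : 0 < m)
    (a : Fin n → ℝ) (ha : ∀ k, 0 ≤ a k)
    (Ms : Matrix (Fin n) (Fin n) ℝ) (hMs : StrictlyLeftSubstochastic Ms)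
    (Md : Fin m → Matrix (Fin n) (Fin n) ℝ) (hMd : ∀ i, StrictlyLeftSubstochastic (Md i))
    (d : Fin m → (Fin m → Fin n → ℝ) → (Fin n → ℝ) → (Fin n → ℝ))
    (hd : ∀ i r s k, 0 ≤ d i r s k)
    (r : Fin m → Fin n → ℝ) (s : Fin n → ℝ)
    (hsol : LiqSystem a Ms Md d r s) :
    a + Ms.mulVec s + ∑ i, (Md i).mulVec (r i) = s + ∑ i, r i := by
  obtain ⟨h0, hjpos, hs⟩ := hsol
  funext k
  set A : ℝ := a k + Ms.mulVec s k + ∑ i, (Md i).mulVec (r i) k with hA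
  have min_lem : ∀ x y : ℝ, min x y = y - max (y - x) 0 := by
    intro x y
    rcases le_total x y with h | h
    · rw [min_eq_left h, max_eq_left (by linarith)]; ring
    · rw [min_eq_right h, max_eq_right (by linarith)]; ring
  have step_lem : ∀ x e : ℝ, 0 ≤ e → min e (max x 0) = max x 0 - max (x - e) 0 := by
    intro x e he
    rcases le_total x 0 with h | h
    · rw [max_eq_right h, max_eq_right (by linarith), min_eq_right he]; ring
    · rw [max_eq_left h]
      rcases le_total e x with h' | h'
      · rw [min_eq_left h', max_eq_left (by linarith)]; ring
      · rw [min_eq_right h', max_eq_right (by linarith)]; ring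
  have key : ∀ (j : ℕ) (hjm : j < m),
      ∑ i ∈ Finset.Iic (⟨j, hjm⟩ : Fin m), r i k
        = A - max (A - ∑ i ∈ Finset.Iic (⟨j, hjm⟩ : Fin m), d i r s k) 0 := by
    intro j
    induction j with
    | zero =>
      intro hjm
      have hsing : Finset.Iic (⟨0, hjm⟩ : Fin m) = {⟨0, hjm⟩} := by
        ext i
        simp [Fin.le_def, Nat.le_zero, Fin.ext_iff]
      have h := congrFun (h0 ⟨0, hjm⟩ rfl) k
      simp only [vmin, Pi.add_apply, Finset.sum_apply] at h
      rw [hsing, Finset.sum_singleton, Finset.sum_singleton, h, ← hA, min_lem]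
    | succ j ih =>
      intro hjm
      have hjm' : j < m := Nat.lt_of_succ_lt hjm
      have hIio : Finset.Iio (⟨j + 1, hjm⟩ : Fin m) = Finset.Iic (⟨j, hjm'⟩ : Fin m) := by
        ext i
        simp [Fin.lt_def, Fin.le_def, Nat.lt_succ_iff]
      have hIic : Finset.Iic (⟨j + 1, hjm⟩ : Fin m)
          = insert ⟨j + 1, hjm⟩ (Finset.Iio ⟨j + 1, hjm⟩) := (Finset.Iio_insert _).symm
      have hnotmem : (⟨j + 1, hjm⟩ : Fin m) ∉ Finset.Iio (⟨j + 1, hjm⟩ : Fin m) := by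
        simp
      have hr := congrFun (hjpos ⟨j + 1, hjm⟩ (by simp)) k
      simp only [vmin, vpos, Pi.add_apply, Pi.sub_apply, Finset.sum_apply] at hr
      rw [hIio, ← hA] at hr
      rw [hIic, Finset.sum_insert hnotmem, Finset.sum_insert hnotmem, hIio, ih hjm', hr,
        step_lem _ _ (hd _ r s k),
        show A - ∑ i ∈ Finset.Iic (⟨j, hjm'⟩ : Fin m), d i r s k - d ⟨j + 1, hjm⟩ r s k
          = A - (d ⟨j + 1, hjm⟩ r s k + ∑ i ∈ Finset.Iic (⟨j, hjm'⟩ : Fin m), d i r s k)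
          from by ring]
      ring
  have huniv : Finset.Iic (⟨m - 1, by omega⟩ : Fin m) = Finset.univ := by
    ext i
    simp only [Finset.mem_univ, iff_true, Finset.mem_Iic, Fin.le_def]
    omega
  have hkey := key (m - 1) (by omega)
  rw [huniv] at hkey
  have hsk := congrFun hs k
  simp only [vpos, Pi.add_apply, Pi.sub_apply, Finset.sum_apply] at hsk
  rw [← hA] at hsk
  simp only [Pi.add_apply, Finset.sum_apply, ← hA]
  rw [hsk, hkey]
  ring
end
end

section
/- Capital structure irrelevance: for every solution (r¹,…,r^m,s) of the liquidation value system, the total value of externally held claims equals the total value of the exogenous assets, i.e. (‖s‖₁ + Σ_{i=1}^m ‖rⁱ‖₁) − (‖Mˢ·s‖₁ + Σ_{i=1}^m ‖M^{d,i}·rⁱ‖₁) = ‖a‖₁. -/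
open Matrix Finset Filter

noncomputable section

lemma min_split (a u v : ℝ) (huv : u ≤ v) :
    min a v = min a u + min (v - u) (max (a - u) 0) := by
  rcases le_total a u with h | h <;> rcases le_total a v with h2 | h2 <;>
    simp [min_def, max_def] <;> split_ifs <;> linarith

lemma waterfall (a : ℝ) (ha : 0 ≤ a) (g : ℕ → ℝ) (hg : ∀ i, 0 ≤ g i) (M : ℕ) :
    ∑ i ∈ Finset.range M, min (g i) (max (a - ∑ i' ∈ Finset.range i, g i') 0)
      = min a (∑ i ∈ Finset.range M, g i) := by
  induction M with
  | zero => simp [min_eq_right ha]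
  | succ M ih =>
    rw [Finset.sum_range_succ, ih, Finset.sum_range_succ g,
      min_split a (∑ i ∈ Finset.range M, g i) (∑ i ∈ Finset.range M, g i + g M)
        (by linarith [hg M])]
    ring_nf

/-- Capital structure irrelevance: the total value of externally held claims equals
the total value of the exogenous assets. -/
theorem capital_structure_irrelevance {n m : ℕ} (hn : 0 < n) (hm : 0 < m)
    (a : Fin n → ℝ) (ha : ∀ k, 0 ≤ a k)
    (Ms : Matrix (Fin n) (Fin n) ℝ) (hMs : StrictlyLeftSubstochastic Ms)
    (Md : Fin m → Matrix (Fin n) (Fin n) ℝ) (hMd : ∀ i, StrictlyLeftSubstochastic (Md i))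
    (d : Fin m → (Fin m → Fin n → ℝ) → (Fin n → ℝ) → (Fin n → ℝ))
    (hd : ∀ i r s k, 0 ≤ d i r s k)
    (r : Fin m → Fin n → ℝ) (s : Fin n → ℝ)
    (hsol : LiqSystem a Ms Md d r s) :
    (l1 s + ∑ i, l1 (r i)) - (l1 (Ms.mulVec s) + ∑ i, l1 ((Md i).mulVec (r i))) = l1 a := by
  obtain ⟨h0, hp, hs⟩ := hsol
  set A : Fin n → ℝ := a + Ms.mulVec s + ∑ i, (Md i).mulVec (r i) with hA
  have hAk : ∀ k, A k = a k + Ms.mulVec s k + ∑ i, (Md i).mulVec (r i) k := by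
    intro k; simp [hA, Finset.sum_apply]
  -- pointwise form of s equation
  have hsk : ∀ k, s k = max (A k - ∑ i, d i r s k) 0 := by
    intro k
    have := congrFun hs k
    simpa [vpos, Finset.sum_apply] using this
  have hs0 : ∀ k, 0 ≤ s k := fun k => (hsk k) ▸ le_max_right _ _
  -- pointwise form of the junior equations
  have hpk : ∀ j : Fin m, (j : ℕ) ≠ 0 → ∀ k,
      r j k = min (d j r s k) (max (A k - ∑ i ∈ Finset.Iio j, d i r s k) 0) := by
    intro j hj k
    have := congrFun (hp j hj) k
    simpa [vmin, vpos, Finset.sum_apply] using this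
  have hpnn : ∀ j : Fin m, (j : ℕ) ≠ 0 → ∀ k, 0 ≤ r j k := by
    intro j hj k
    rw [hpk j hj k]
    exact le_min (hd _ _ _ _) (le_max_right _ _)
  set j0 : Fin m := ⟨0, hm⟩ with hj0
  have hr0 : ∀ k, r j0 k = min (d j0 r s k) (A k) := by
    intro k
    have := congrFun (h0 j0 rfl) k
    simpa [vmin] using this
  have hmvk : ∀ (M : Matrix (Fin n) (Fin n) ℝ) (v : Fin n → ℝ) (k : Fin n),
      M.mulVec v k = ∑ j, M k j * v j := by
    intro M v k; simp [Matrix.mulVec, dotProduct]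
  -- nonnegativity of Ms.mulVec s
  have hMss : ∀ k, 0 ≤ Ms.mulVec s k := by
    intro k
    rw [hmvk]
    exact Finset.sum_nonneg fun j _ => mul_nonneg (hMs.1 k j) (hs0 j)
  -- nonnegativity of r j0
  set M0 : Matrix (Fin n) (Fin n) ℝ := Md j0 with hM0
  set f : Fin n → ℝ := fun k => max (-(r j0 k)) 0 with hfdef
  have hfnn : ∀ k, 0 ≤ f k := fun k => le_max_right _ _
  have hfb : ∀ k, f k ≤ ∑ j, M0 k j * f j := by
    intro k
    by_cases h : 0 ≤ r j0 k
    · have : f k = 0 := max_eq_right (by linarith)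
      rw [this]
      exact Finset.sum_nonneg fun j _ => mul_nonneg ((hMd j0).1 k j) (hfnn j)
    · push_neg at h
      have hrA : r j0 k = A k := by
        rcases min_choice (d j0 r s k) (A k) with hc | hc
        · exfalso; have := hr0 k; rw [hc] at this; linarith [hd j0 r s k]
        · rw [hr0 k, hc]
      -- A k ≥ (M0.mulVec (r j0)) k
      have hsplit : (M0.mulVec (r j0)) k + ∑ i ∈ Finset.univ.erase j0, (Md i).mulVec (r i) k
          = ∑ i, (Md i).mulVec (r i) k := by
        exact Finset.add_sum_erase _ (fun i => (Md i).mulVec (r i) k) (Finset.mem_univ j0)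
      have herase : 0 ≤ ∑ i ∈ Finset.univ.erase j0, (Md i).mulVec (r i) k := by
        apply Finset.sum_nonneg
        intro i hi
        have hi' : (i : ℕ) ≠ 0 := by
          intro hv
          exact (Finset.mem_erase.mp hi).1 (Fin.ext hv)
        rw [hmvk]
        exact Finset.sum_nonneg fun j _ => mul_nonneg ((hMd i).1 k j) (hpnn i hi' j)
      have hge : (M0.mulVec (r j0)) k ≤ A k := by
        rw [hAk k, ← hsplit]
        have := ha k; have := hMss k; linarith
      have hfk : f k = -(A k) := by
        rw [hfdef]; simp only []
        rw [hrA] at h ⊢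
        exact max_eq_left (by linarith)
      rw [hfk]
      have : -(A k) ≤ -((M0.mulVec (r j0)) k) := by linarith
      refine this.trans ?_
      have hmv : (M0.mulVec (r j0)) k = ∑ j, M0 k j * r j0 j := by
        simp [Matrix.mulVec, dotProduct]
      rw [hmv, ← Finset.sum_neg_distrib]
      apply Finset.sum_le_sum
      intro j _
      have h1 : -(r j0 j) ≤ f j := le_max_left _ _
      have h2 : 0 ≤ M0 k j := (hMd j0).1 k j
      nlinarith
  have hfz : ∀ k, f k = 0 := by
    by_contra hc
    push_neg at hc
    obtain ⟨k0, hk0⟩ := hc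
    have hk0' : 0 < f k0 := lt_of_le_of_ne (hfnn k0) (Ne.symm hk0)
    have hsum : ∑ k, f k ≤ ∑ j, (∑ k, M0 k j) * f j := by
      calc ∑ k, f k ≤ ∑ k, ∑ j, M0 k j * f j := Finset.sum_le_sum fun k _ => hfb k
        _ = ∑ j, ∑ k, M0 k j * f j := Finset.sum_comm
        _ = ∑ j, (∑ k, M0 k j) * f j := by simp_rw [Finset.sum_mul]
    have hlt : ∑ j, (∑ k, M0 k j) * f j < ∑ j, f j := by
      apply Finset.sum_lt_sum
      · intro j _
        have h1 : ∑ k, M0 k j < 1 := (hMd j0).2 j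
        nlinarith [hfnn j]
      · exact ⟨k0, Finset.mem_univ k0, by nlinarith [(hMd j0).2 k0]⟩
    linarith
  have hr0nn : ∀ k, 0 ≤ r j0 k := by
    intro k
    have h1 : -(r j0 k) ≤ f k := le_max_left _ _
    rw [hfz k] at h1; linarith
  have hrnn : ∀ i k, 0 ≤ r i k := by
    intro i k
    by_cases h : (i : ℕ) = 0
    · have : i = j0 := Fin.ext h
      rw [this]; exact hr0nn k
    · exact hpnn i h k
  have hAnn : ∀ k, 0 ≤ A k := by
    intro k
    rw [hAk k]
    have h3 : 0 ≤ ∑ i, (Md i).mulVec (r i) k :=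
      Finset.sum_nonneg fun i _ => by
        rw [hmvk]
        exact Finset.sum_nonneg fun j _ => mul_nonneg ((hMd i).1 k j) (hrnn i j)
    have := ha k; have := hMss k; linarith
  -- uniform formula
  have hrall : ∀ i : Fin m, ∀ k,
      r i k = min (d i r s k) (max (A k - ∑ i' ∈ Finset.Iio i, d i' r s k) 0) := by
    intro i k
    by_cases h : (i : ℕ) = 0
    · have hi : i = j0 := Fin.ext h
      have hempt : Finset.Iio i = ∅ := by
        apply Finset.eq_empty_of_forall_notMem
        intro x hx
        rw [Finset.mem_Iio, hi] at hx
        exact Nat.not_lt_zero x.1 hx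
      rw [hempt]
      simp only [Finset.sum_empty, sub_zero]
      rw [max_eq_left (hAnn k), hi, hr0 k]
    · exact hpk i h k
  -- key pointwise identity
  have key : ∀ k, s k + ∑ i, r i k = A k := by
    intro k
    set g : ℕ → ℝ := fun i => if h : i < m then d ⟨i, h⟩ r s k else 0 with hg
    have hgnn : ∀ i, 0 ≤ g i := by
      intro i; rw [hg]; dsimp only; split
      · exact hd _ _ _ _
      · exact le_refl 0
    have hbr : ∀ j : Fin m, ∑ i ∈ Finset.Iio j, d i r s k = ∑ i ∈ Finset.range (j : ℕ), g i := by
      intro j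
      rw [← Nat.Iio_eq_range, ← Fin.map_valEmbedding_Iio, Finset.sum_map]
      apply Finset.sum_congr rfl
      intro i _
      simp [hg, Fin.valEmbedding, i.isLt]
    have huniv : ∑ i : Fin m, d i r s k = ∑ i ∈ Finset.range m, g i := by
      rw [← Fin.sum_univ_eq_sum_range g m]
      apply Finset.sum_congr rfl
      intro i _
      simp [hg, i.isLt]
    have hrk : ∀ i : Fin m,
        r i k = min (g (i : ℕ)) (max (A k - ∑ i' ∈ Finset.range (i : ℕ), g i') 0) := by
      intro i
      rw [hrall i k, hbr i]
      congr 1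
      simp [hg, i.isLt]
    have hsumr : ∑ i : Fin m, r i k = min (A k) (∑ i : Fin m, d i r s k) := by
      calc ∑ i : Fin m, r i k
          = ∑ i : Fin m,
            (fun t : ℕ => min (g t) (max (A k - ∑ i' ∈ Finset.range t, g i') 0)) (i : ℕ) :=
            Finset.sum_congr rfl fun i _ => hrk i
        _ = ∑ t ∈ Finset.range m,
            min (g t) (max (A k - ∑ i' ∈ Finset.range t, g i') 0) :=
            Fin.sum_univ_eq_sum_range
              (fun t : ℕ => min (g t) (max (A k - ∑ i' ∈ Finset.range t, g i') 0)) m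
        _ = min (A k) (∑ t ∈ Finset.range m, g t) := waterfall (A k) (hAnn k) g hgnn m
        _ = min (A k) (∑ i : Fin m, d i r s k) := by rw [huniv]
    rw [hsk k, hsumr]
    rcases le_total (A k) (∑ i : Fin m, d i r s k) with h | h
    · rw [min_eq_left h, max_eq_right (by linarith)]; ring
    · rw [min_eq_right h, max_eq_left (by linarith)]; ring
  -- final accounting
  have hMdnn : ∀ i k, 0 ≤ (Md i).mulVec (r i) k := by
    intro i k
    rw [hmvk]
    exact Finset.sum_nonneg fun j _ => mul_nonneg ((hMd i).1 k j) (hrnn i j)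
  have e1 : l1 s = ∑ k, s k := Finset.sum_congr rfl fun k _ => abs_of_nonneg (hs0 k)
  have e2 : (∑ i, l1 (r i)) = ∑ i, ∑ k, r i k :=
    Finset.sum_congr rfl fun i _ =>
      Finset.sum_congr rfl fun k _ => abs_of_nonneg (hrnn i k)
  have e3 : l1 (Ms.mulVec s) = ∑ k, Ms.mulVec s k :=
    Finset.sum_congr rfl fun k _ => abs_of_nonneg (hMss k)
  have e4 : (∑ i, l1 ((Md i).mulVec (r i))) = ∑ i, ∑ k, (Md i).mulVec (r i) k :=
    Finset.sum_congr rfl fun i _ =>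
      Finset.sum_congr rfl fun k _ => abs_of_nonneg (hMdnn i k)
  have e5 : l1 a = ∑ k, a k := Finset.sum_congr rfl fun k _ => abs_of_nonneg (ha k)
  rw [e1, e2, e3, e4, e5]
  have hc1 : (∑ i, ∑ k, r i k) = ∑ k, ∑ i : Fin m, r i k := Finset.sum_comm
  have hc2 : (∑ i, ∑ k, (Md i).mulVec (r i) k) = ∑ k, ∑ i : Fin m, (Md i).mulVec (r i) k :=
    Finset.sum_comm
  have hsum : (∑ k, s k) + ∑ k, ∑ i : Fin m, r i k = ∑ k, A k := by
    rw [← Finset.sum_add_distrib]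
    exact Finset.sum_congr rfl fun k _ => key k
  have hAsum : (∑ k, A k)
      = (∑ k, a k) + (∑ k, Ms.mulVec s k) + ∑ k, ∑ i : Fin m, (Md i).mulVec (r i) k := by
    rw [← Finset.sum_add_distrib, ← Finset.sum_add_distrib]
    exact Finset.sum_congr rfl fun k _ => hAk k
  rw [hc1, hc2]
  linarith
end
end

section
/- Balance sheet bound: for every solution (r¹,…,r^m,s) of the liquidation value system, the size of the sum of all balance sheets satisfies ‖s‖₁ + Σ_{i=1}^m ‖rⁱ‖₁ ≤ (L^max + 1)·‖a‖₁ = ‖a‖₁/(1 − I^max). -/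
open Matrix Finset Filter

noncomputable section

lemma min_pos_part (b q : ℝ) (hb : 0 ≤ b) :
    min b (max q 0) + max (q - b) 0 = max q 0 := by
  rcases le_total q 0 with h|h <;> rcases le_total b q with h2|h2 <;>
    simp only [min_def, max_def] <;> split_ifs <;> linarith

lemma colsum_bound {n : ℕ} (M : Matrix (Fin n) (Fin n) ℝ) (c : ℝ)
    (hc : ∀ j, ∑ i, M i j ≤ c)
    (x : Fin n → ℝ) (hx : ∀ j, 0 ≤ x j) :
    ∑ k, M.mulVec x k ≤ c * ∑ j, x j := by
  simp only [Matrix.mulVec, dotProduct]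
  rw [Finset.sum_comm, Finset.mul_sum]
  apply Finset.sum_le_sum; intro j _
  rw [← Finset.sum_mul]
  exact mul_le_mul_of_nonneg_right (hc j) (hx j)

lemma mulVec_nonneg' {n : ℕ} (M : Matrix (Fin n) (Fin n) ℝ)
    (hM : ∀ i j, 0 ≤ M i j) (x : Fin n → ℝ) (hx : ∀ j, 0 ≤ x j) (k : Fin n) :
    0 ≤ M.mulVec x k := by
  simp only [Matrix.mulVec, dotProduct]
  exact Finset.sum_nonneg fun j _ => mul_nonneg (hM k j) (hx j)

lemma mulVec_mono' {n : ℕ} (M : Matrix (Fin n) (Fin n) ℝ)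
    (hM : ∀ i j, 0 ≤ M i j) (x y : Fin n → ℝ) (hxy : ∀ j, x j ≤ y j) (k : Fin n) :
    M.mulVec x k ≤ M.mulVec y k := by
  simp only [Matrix.mulVec, dotProduct]
  exact Finset.sum_le_sum fun j _ => mul_le_mul_of_nonneg_left (hxy j) (hM k j)

lemma telescope {m : ℕ} (p : ℝ) (hp : 0 ≤ p) (f g : Fin m → ℝ) (hf : ∀ j, 0 ≤ f j)
    (hg : ∀ j, g j = min (f j) (max (p - ∑ i ∈ Finset.Iio j, f i) 0)) :
    ∑ j, g j + max (p - ∑ j, f j) 0 = p := by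
  have key : ∀ t, t ≤ m →
      ∑ j ∈ univ.filter (fun j : Fin m => (j : ℕ) < t), g j +
        max (p - ∑ j ∈ univ.filter (fun j : Fin m => (j : ℕ) < t), f j) 0 = p := by
    intro t
    induction t with
    | zero =>
      intro _
      simp [hp, max_eq_left hp]
    | succ t ih =>
      intro ht
      have ht' : t < m := ht
      set jt : Fin m := ⟨t, ht'⟩ with hjt
      have hins : univ.filter (fun j : Fin m => (j : ℕ) < t + 1) =
          insert jt (univ.filter (fun j : Fin m => (j : ℕ) < t)) := by
        ext j
        simp only [Finset.mem_filter, Finset.mem_univ, true_and, Finset.mem_insert]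
        constructor
        · intro h
          rcases Nat.lt_succ_iff_lt_or_eq.mp h with h | h
          · exact Or.inr h
          · exact Or.inl (Fin.ext h)
        · rintro (h | h)
          · rw [h, hjt]; exact Nat.lt_succ_self t
          · omega
      have hnot : jt ∉ univ.filter (fun j : Fin m => (j : ℕ) < t) := by
        simp [hjt]
      have hIio : Finset.Iio jt = univ.filter (fun j : Fin m => (j : ℕ) < t) := by
        ext i
        simp [Finset.mem_Iio, Fin.lt_def, -Fin.val_fin_lt, hjt]
      rw [hins, Finset.sum_insert hnot, Finset.sum_insert hnot]
      have hgjt : g jt = min (f jt)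
          (max (p - ∑ j ∈ univ.filter (fun j : Fin m => (j : ℕ) < t), f j) 0) := by
        rw [hg jt, hIio]
      set Sf := ∑ j ∈ univ.filter (fun j : Fin m => (j : ℕ) < t), f j
      set Sg := ∑ j ∈ univ.filter (fun j : Fin m => (j : ℕ) < t), g j
      have hstep : g jt + max (p - (f jt + Sf)) 0 = max (p - Sf) 0 := by
        have h := min_pos_part (f jt) (p - Sf) (hf jt)
        rw [hgjt]
        have : p - (f jt + Sf) = (p - Sf) - f jt := by ring
        rw [this]
        exact h
      have ihv := ih (le_of_lt ht')
      linarith [hstep, ihv]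
  have hfin := key m le_rfl
  have huniv : univ.filter (fun j : Fin m => (j : ℕ) < m) = univ := by
    ext j; simp [j.is_lt]
  rwa [huniv] at hfin

/-- Balance sheet bound: the size of the sum of all balance sheets is at most
(L^max + 1)·‖a‖₁ = ‖a‖₁/(1 − I^max). -/
theorem balance_sheet_bound {n m : ℕ} (hn : 0 < n) (hm : 0 < m)
    (a : Fin n → ℝ) (ha : ∀ k, 0 ≤ a k)
    (Ms : Matrix (Fin n) (Fin n) ℝ) (hMs : StrictlyLeftSubstochastic Ms)
    (Md : Fin m → Matrix (Fin n) (Fin n) ℝ) (hMd : ∀ i, StrictlyLeftSubstochastic (Md i))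
    (d : Fin m → (Fin m → Fin n → ℝ) → (Fin n → ℝ) → (Fin n → ℝ))
    (hd : ∀ i r s k, 0 ≤ d i r s k)
    (r : Fin m → Fin n → ℝ) (s : Fin n → ℝ)
    (hsol : LiqSystem a Ms Md d r s) :
    l1 s + ∑ i, l1 (r i) ≤ (Imax Ms Md / (1 - Imax Ms Md) + 1) * l1 a ∧
    (Imax Ms Md / (1 - Imax Ms Md) + 1) * l1 a = l1 a / (1 - Imax Ms Md) := by
  obtain ⟨hr0, hrj, hs⟩ := hsol
  have hnen : Nonempty (Fin n) := ⟨⟨0, hn⟩⟩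
  have hmen : Nonempty (Fin m) := ⟨⟨0, hm⟩⟩
  set I := Imax Ms Md with hIdef
  have hIub_s : ∀ j, ∑ i, Ms i j ≤ I := fun j =>
    le_trans (le_ciSup (f := fun j => ∑ i, Ms i j) (Set.finite_range _).bddAbove j)
      (le_max_left _ _)
  have hIub_d : ∀ l j, ∑ i, (Md l) i j ≤ I := by
    intro l j
    refine le_trans (le_trans
      (le_ciSup (f := fun j => ∑ i, (Md l) i j) (Set.finite_range _).bddAbove j) ?_)
      (le_max_right _ _)
    exact le_ciSup (f := fun l => ⨆ j, ∑ i, (Md l) i j) (Set.finite_range _).bddAbove l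
  have hI0 : 0 ≤ I := le_trans (Finset.sum_nonneg fun i _ => (hMs.1 i ⟨0, hn⟩)) (hIub_s ⟨0, hn⟩)
  have hI1 : I < 1 := by
    have h1 : (⨆ j, ∑ i, Ms i j) < 1 := by
      obtain ⟨x0, hx0⟩ := Finite.exists_max (fun j => ∑ i, Ms i j)
      exact lt_of_le_of_lt (ciSup_le fun j => hx0 j) (hMs.2 x0)
    have h2 : (⨆ l, ⨆ j, ∑ i, (Md l) i j) < 1 := by
      obtain ⟨l0, hl0⟩ := Finite.exists_max (fun l => ⨆ j, ∑ i, (Md l) i j)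
      refine lt_of_le_of_lt (ciSup_le fun l => hl0 l) ?_
      obtain ⟨x0, hx0⟩ := Finite.exists_max (fun j => ∑ i, (Md l0) i j)
      exact lt_of_le_of_lt (ciSup_le fun j => hx0 j) ((hMd l0).2 x0)
    exact max_lt h1 h2
  have h1I : 0 < 1 - I := by linarith
  set P : Fin n → ℝ := a + Ms.mulVec s + ∑ i, (Md i).mulVec (r i) with hP
  have hPk : ∀ k, P k = a k + Ms.mulVec s k + ∑ i, (Md i).mulVec (r i) k := by
    intro k
    simp [hP, Finset.sum_apply]
  have hs_nn : ∀ k, 0 ≤ s k := by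
    intro k; rw [hs]; exact le_max_right _ _
  have hr_nn' : ∀ j : Fin m, (j : ℕ) ≠ 0 → ∀ k, 0 ≤ r j k := by
    intro j hj k
    rw [hrj j hj]
    exact le_min (hd j r s k) (le_max_right _ _)
  set j0 : Fin m := ⟨0, hm⟩ with hj0def
  have hr0' : r j0 = vmin (d j0 r s) P := hr0 j0 rfl
  have hne_j0 : ∀ i : Fin m, i ≠ j0 → (i : ℕ) ≠ 0 := by
    intro i hi hc
    exact hi (Fin.ext hc)
  -- nonnegativity of r j0
  have hr0_nn : ∀ k, 0 ≤ r j0 k := by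
    by_contra hcon
    push_neg at hcon
    obtain ⟨k0, hk0⟩ := hcon
    set u : Fin n → ℝ := fun k => max (-(r j0 k)) 0 with hu
    have hu_nn : ∀ k, 0 ≤ u k := fun k => le_max_right _ _
    have hru_ge : ∀ k, -(u k) ≤ r j0 k := by
      intro k
      rcases le_or_gt 0 (r j0 k) with h | h
      · have : u k = 0 ∨ u k = -(r j0 k) := by
          rcases max_cases (-(r j0 k)) 0 with ⟨h1, _⟩ | ⟨h1, _⟩
          · exact Or.inr h1
          · exact Or.inl h1
        rcases this with h1 | h1 <;> rw [h1] <;> linarith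
      · have : u k = -(r j0 k) := max_eq_left (by linarith)
        rw [this]; linarith
    have hkey : ∀ k, u k ≤ (Md j0).mulVec u k := by
      intro k
      rcases le_or_gt 0 (r j0 k) with h | h
      · have h0 : u k = 0 := max_eq_right (by linarith)
        rw [h0]
        exact mulVec_nonneg' _ (hMd j0).1 u hu_nn k
      · have hmin : r j0 k = min (d j0 r s k) (P k) := congrFun hr0' k
        have hrP : r j0 k = P k := by
          rcases le_total (d j0 r s k) (P k) with h' | h'
          · rw [min_eq_left h'] at hmin
            exact absurd h (not_lt.mpr (hmin ▸ hd j0 r s k))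
          · rw [min_eq_right h'] at hmin; exact hmin
        have huk : u k = -(P k) := by
          rw [hu]
          simp only
          rw [max_eq_left (by linarith [hrP ▸ h]), hrP]
        have hPlb : (Md j0).mulVec (r j0) k ≤ P k := by
          rw [hPk k]
          have hsum : (Md j0).mulVec (r j0) k ≤ ∑ i, (Md i).mulVec (r i) k := by
            rw [← Finset.add_sum_erase _ _ (Finset.mem_univ j0)]
            have : 0 ≤ ∑ i ∈ univ.erase j0, (Md i).mulVec (r i) k :=
              Finset.sum_nonneg fun i hi =>
                mulVec_nonneg' _ (hMd i).1 _ (hr_nn' i (hne_j0 i (Finset.mem_erase.mp hi).1)) k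
            linarith
          have h1 : 0 ≤ a k := ha k
          have h2 : 0 ≤ Ms.mulVec s k := mulVec_nonneg' _ hMs.1 s hs_nn k
          linarith
        have hmono : -(Md j0).mulVec u k ≤ (Md j0).mulVec (r j0) k := by
          have := mulVec_mono' (Md j0) (hMd j0).1 (fun j => -(u j)) (r j0) hru_ge k
          rwa [show (fun j => -(u j)) = -u from rfl, Matrix.mulVec_neg, Pi.neg_apply] at this
        rw [huk]
        linarith
    have hsum_le : ∑ k, u k ≤ I * ∑ k, u k :=
      le_trans (Finset.sum_le_sum fun k _ => hkey k)
        (colsum_bound (Md j0) I (hIub_d j0) u hu_nn)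
    have hsum_pos : 0 < ∑ k, u k := by
      have h1 : 0 < u k0 := by
        rw [hu]; simp only
        rw [max_eq_left (by linarith)]; linarith
      have h2 : u k0 ≤ ∑ k, u k :=
        Finset.single_le_sum (fun k _ => hu_nn k) (Finset.mem_univ k0)
      linarith
    nlinarith
  have hr_nn : ∀ j : Fin m, ∀ k, 0 ≤ r j k := by
    intro j k
    by_cases hj : (j : ℕ) = 0
    · have : j = j0 := Fin.ext hj
      rw [this]; exact hr0_nn k
    · exact hr_nn' j hj k
  have hP_nn : ∀ k, 0 ≤ P k := by
    intro k
    rw [hPk k]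
    have h1 : 0 ≤ Ms.mulVec s k := mulVec_nonneg' _ hMs.1 s hs_nn k
    have h2 : 0 ≤ ∑ i, (Md i).mulVec (r i) k :=
      Finset.sum_nonneg fun i _ => mulVec_nonneg' _ (hMd i).1 _ (hr_nn i) k
    linarith [ha k]
  -- uniform formula
  have hform : ∀ (j : Fin m) (k : Fin n),
      r j k = min (d j r s k) (max (P k - ∑ i ∈ Finset.Iio j, d i r s k) 0) := by
    intro j k
    by_cases hj : (j : ℕ) = 0
    · have hjj : j = j0 := Fin.ext hj
      have hempty : Finset.Iio j = (∅ : Finset (Fin m)) := by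
        ext i
        simp only [Finset.mem_Iio, Finset.notMem_empty, iff_false, not_lt, Fin.le_def, hj]
        exact Nat.zero_le _
      rw [hempty]
      simp only [Finset.sum_empty, sub_zero, max_eq_left (hP_nn k)]
      rw [hjj]
      exact congrFun hr0' k
    · have := congrFun (hrj j hj) k
      simpa only [vmin, vpos, Pi.sub_apply, Finset.sum_apply] using this
  -- componentwise balance
  have hbal : ∀ k, s k + ∑ j, r j k = P k := by
    intro k
    have ht := telescope (P k) (hP_nn k) (fun j => d j r s k) (fun j => r j k)
      (fun j => hd j r s k) (fun j => hform j k)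
    have hsk : s k = max (P k - ∑ j, d j r s k) 0 := by
      have := congrFun hs k
      simpa only [vpos, Pi.sub_apply, Finset.sum_apply] using this
    rw [hsk]
    linarith [ht]
  -- l1 identities
  have hl1s : l1 s = ∑ k, s k :=
    Finset.sum_congr rfl fun k _ => abs_of_nonneg (hs_nn k)
  have hl1r : ∀ j, l1 (r j) = ∑ k, r j k := fun j =>
    Finset.sum_congr rfl fun k _ => abs_of_nonneg (hr_nn j k)
  have hl1a : l1 a = ∑ k, a k :=
    Finset.sum_congr rfl fun k _ => abs_of_nonneg (ha k)
  set T := l1 s + ∑ i, l1 (r i) with hT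
  have hTsum : T = ∑ k, P k := by
    rw [hT, hl1s]
    have : ∑ i, l1 (r i) = ∑ i, ∑ k, r i k := Finset.sum_congr rfl fun i _ => hl1r i
    rw [this, Finset.sum_comm, ← Finset.sum_add_distrib]
    exact Finset.sum_congr rfl fun k _ => hbal k
  have hPle : ∑ k, P k ≤ l1 a + I * T := by
    have h1 : ∑ k, Ms.mulVec s k ≤ I * ∑ k, s k := colsum_bound Ms I hIub_s s hs_nn
    have h2 : ∀ i, ∑ k, (Md i).mulVec (r i) k ≤ I * ∑ k, r i k := fun i =>
      colsum_bound (Md i) I (hIub_d i) (r i) (hr_nn i)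
    have hsplit : ∑ k, P k = ∑ k, a k + ∑ k, Ms.mulVec s k + ∑ k, ∑ i, (Md i).mulVec (r i) k := by
      simp only [hPk, Finset.sum_add_distrib]
    rw [hsplit, Finset.sum_comm (f := fun k i => (Md i).mulVec (r i) k)]
    have h3 : ∑ i, ∑ k, (Md i).mulVec (r i) k ≤ ∑ i, I * ∑ k, r i k :=
      Finset.sum_le_sum fun i _ => h2 i
    have h4 : ∑ i, I * ∑ k, r i k = I * ∑ i, l1 (r i) := by
      rw [← Finset.mul_sum]
      congr 1
      exact Finset.sum_congr rfl fun i _ => (hl1r i).symm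
    have h5 : I * ∑ k, s k = I * l1 s := by rw [hl1s]
    have hTexp : l1 a + I * T = ∑ k, a k + I * l1 s + I * ∑ i, l1 (r i) := by
      rw [hl1a, hT]; ring
    rw [hTexp]
    linarith [h1, h3.trans_eq h4, h5]
  have hTle : T * (1 - I) ≤ l1 a := by nlinarith [hTsum ▸ hPle]
  have heq : (I / (1 - I) + 1) * l1 a = l1 a / (1 - I) := by
    field_simp
    ring
  refine ⟨?_, heq⟩
  rw [heq]
  exact (le_div_iff₀ h1I).mpr hTle
end
end

section
/- Contraction property: under the seniority structure condition on the liability functions, the map Φ : ℝ^{n(m+1)} → ℝ^{n(m+1)} sending (r¹,…,r^m,s) to the tuple of right-hand sides of the liquidation value system satisfies ‖Φ(x) − Φ(y)‖₁ ≤ I^max · ‖x − y‖₁ for all x, y ∈ ℝ^{n(m+1)}; in particular, since I^max < 1, Φ is a strict contraction with respect to the ℓ¹-metric. -/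
open Matrix Finset Filter

noncomputable section

/-- The map Φ sending (r¹,…,r^m,s) to the tuple of right-hand sides of the
liquidation value system. -/
def Phi {n m : ℕ} (a : Fin n → ℝ) (Ms : Matrix (Fin n) (Fin n) ℝ)
    (Md : Fin m → Matrix (Fin n) (Fin n) ℝ)
    (d : Fin m → (Fin m → Fin n → ℝ) → (Fin n → ℝ) → (Fin n → ℝ)) :
    ((Fin m → Fin n → ℝ) × (Fin n → ℝ)) → ((Fin m → Fin n → ℝ) × (Fin n → ℝ)) :=
  fun p =>
    (fun j =>
      if (j : ℕ) = 0 then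
        vmin (d j p.1 p.2) (a + Ms.mulVec p.2 + ∑ i, (Md i).mulVec (p.1 i))
      else
        vmin (d j p.1 p.2)
          (vpos (a + Ms.mulVec p.2 + ∑ i, (Md i).mulVec (p.1 i) -
            ∑ i ∈ Finset.Iio j, d i p.1 p.2)),
     vpos (a + Ms.mulVec p.2 + ∑ i, (Md i).mulVec (p.1 i) - ∑ i, d i p.1 p.2))

/-- ℓ¹-norm on ℝ^{n(m+1)} = (ℝ^n)^m × ℝ^n. -/
def l1P {n m : ℕ} (p : (Fin m → Fin n → ℝ) × (Fin n → ℝ)) : ℝ :=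
  (∑ i, l1 (p.1 i)) + l1 p.2


/-! ### Auxiliary lemmas for the contraction proof -/

/-- Scalar payment function for claim `j` at coordinate level. -/
def Fj {m : ℕ} (c : ℝ) (g : Fin m → ℝ → ℝ) (j : Fin m) (w : ℝ) : ℝ :=
  if (j : ℕ) = 0 then min (g j w) (c + w)
  else min (g j w) (max (c + w - ∑ i ∈ Finset.Iio j, g i w) 0)

/-- Scalar equity function at coordinate level. -/
def Gv {m : ℕ} (c : ℝ) (g : Fin m → ℝ → ℝ) (w : ℝ) : ℝ :=
  max (c + w - ∑ i, g i w) 0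

lemma min_pos_eq (C P p : ℝ) (hp : 0 ≤ p) :
    min p (max (C - P) 0) = min C (P + p) - min C P := by
  rcases le_total C P with h | h <;> rcases le_total C (P + p) with h2 | h2 <;>
    rcases le_total (C - P) 0 with h3 | h3 <;>
    simp [min_def, max_def] <;> split_ifs <;> linarith

lemma max_sub_eq (C S : ℝ) : max (C - S) 0 = C - min C S := by
  rcases le_total C S with h | h <;> simp [min_def, max_def] <;> split_ifs <;> linarith

lemma sum_Iio_fin {m : ℕ} (g : Fin m → ℝ) (j : Fin m) (g' : ℕ → ℝ)
    (h : ∀ i : Fin m, g' i = g i) :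
    ∑ i ∈ Finset.Iio j, g i = ∑ i ∈ Finset.range (j : ℕ), g' i := by
  rw [← Nat.Iio_eq_range, ← Fin.map_valEmbedding_Iio, Finset.sum_map]
  exact Finset.sum_congr rfl fun i _ => (h i).symm

lemma conservation {m : ℕ} (hm : 0 < m) (c : ℝ) (g : Fin m → ℝ → ℝ)
    (hg0 : ∀ i y, 0 ≤ g i y) (w : ℝ) :
    (∑ j, Fj c g j w) + Gv c g w = c + w := by
  set C := c + w with hC
  set g' : ℕ → ℝ := fun i => if h : i < m then g ⟨i, h⟩ w else 0 with hg'
  have hg'eq : ∀ i : Fin m, g' i = g i w := by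
    intro i; simp [hg', i.2]
  set q : ℕ → ℝ := fun t => ∑ i ∈ Finset.range t, g' i with hq
  set f : ℕ → ℝ := fun t => min C (q t) with hf
  have hIio : ∀ j : Fin m, ∑ i ∈ Finset.Iio j, g i w = q (j : ℕ) := by
    intro j; exact sum_Iio_fin (fun i => g i w) j g' hg'eq
  have hqsucc : ∀ j : Fin m, q ((j : ℕ) + 1) = q (j : ℕ) + g j w := by
    intro j
    simp only [hq, Finset.sum_range_succ]
    rw [hg'eq ⟨(j : ℕ), j.2⟩]
  have hq0 : q 0 = 0 := by simp [hq]
  have hstep : ∀ j : Fin m,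
      Fj c g j w = (f ((j : ℕ) + 1) - f (j : ℕ)) + (if (j : ℕ) = 0 then min C 0 else 0) := by
    intro j
    by_cases h0 : (j : ℕ) = 0
    · simp only [Fj, h0, if_true, hf]
      have hs := hqsucc j
      rw [h0] at hs
      rw [hs, hq0, zero_add, ← hC, min_comm]
      ring
    · simp only [Fj, h0, if_false, add_zero, hf]
      rw [hIio j, hqsucc j, min_pos_eq C (q (j : ℕ)) (g j w) (hg0 j w)]
  have hsum : ∑ j : Fin m, Fj c g j w
      = (∑ i ∈ Finset.range m, (f (i + 1) - f i)) + min C 0 := by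
    rw [Finset.sum_congr rfl fun j _ => hstep j, Finset.sum_add_distrib]
    congr 1
    · exact Fin.sum_univ_eq_sum_range (fun i => f (i + 1) - f i) m
    · have h1 : ∑ j : Fin m, (if (j : ℕ) = 0 then min C 0 else 0)
          = ∑ i ∈ Finset.range m, (if i = 0 then min C 0 else 0) :=
        Fin.sum_univ_eq_sum_range (fun i => if i = 0 then min C 0 else 0) m
      rw [h1, Finset.sum_ite_eq' (Finset.range m) 0 (fun _ => min C 0)]
      simp [hm]
  have htel : ∑ i ∈ Finset.range m, (f (i + 1) - f i) = f m - f 0 :=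
    Finset.sum_range_sub f m
  have hqm : ∑ i : Fin m, g i w = q m := by
    have h2 : q m = ∑ i : Fin m, g' i := by
      rw [Fin.sum_univ_eq_sum_range g' m]
    rw [h2]
    exact Finset.sum_congr rfl fun i _ => (hg'eq i).symm
  have hG : Gv c g w = C - min C (q m) := by
    rw [Gv, hqm, ← hC, max_sub_eq]
  rw [hsum, htel, hG]
  have hfm : f m = min C (q m) := rfl
  have hf0 : f 0 = min C 0 := by rw [show f 0 = min C (q 0) from rfl, hq0]
  rw [hfm, hf0]
  ring

lemma Fj_mono {m : ℕ} (c : ℝ) (g : Fin m → ℝ → ℝ)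
    (hgm : ∀ i, Monotone (g i))
    (hlip : ∀ y1 y2 : ℝ, y2 ≤ y1 → ∑ i, (g i y1 - g i y2) ≤ y1 - y2)
    (j : Fin m) {w w' : ℝ} (hw : w' ≤ w) : Fj c g j w' ≤ Fj c g j w := by
  have hsub : ∑ i ∈ Finset.Iio j, (g i w - g i w') ≤ w - w' := by
    refine le_trans (Finset.sum_le_sum_of_subset_of_nonneg (Finset.subset_univ _) ?_)
      (hlip w w' hw)
    intro i _ _; exact sub_nonneg.2 (hgm i hw)
  have hS : ∑ i ∈ Finset.Iio j, g i w - ∑ i ∈ Finset.Iio j, g i w' ≤ w - w' := by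
    rw [← Finset.sum_sub_distrib]; exact hsub
  unfold Fj
  split_ifs
  · exact min_le_min (hgm j hw) (by linarith)
  · exact min_le_min (hgm j hw) (max_le_max (by linarith) le_rfl)

lemma Gv_mono {m : ℕ} (c : ℝ) (g : Fin m → ℝ → ℝ)
    (hlip : ∀ y1 y2 : ℝ, y2 ≤ y1 → ∑ i, (g i y1 - g i y2) ≤ y1 - y2)
    {w w' : ℝ} (hw : w' ≤ w) : Gv c g w' ≤ Gv c g w := by
  have hS : ∑ i, g i w - ∑ i, g i w' ≤ w - w' := by
    rw [← Finset.sum_sub_distrib]; exact hlip w w' hw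
  unfold Gv
  exact max_le_max (by linarith) le_rfl

lemma key_dir {m : ℕ} (hm : 0 < m) (c : ℝ) (g : Fin m → ℝ → ℝ)
    (hg0 : ∀ i y, 0 ≤ g i y) (hgm : ∀ i, Monotone (g i))
    (hlip : ∀ y1 y2 : ℝ, y2 ≤ y1 → ∑ i, (g i y1 - g i y2) ≤ y1 - y2)
    {w w' : ℝ} (hw : w' ≤ w) :
    (∑ j, |Fj c g j w - Fj c g j w'|) + |Gv c g w - Gv c g w'| ≤ w - w' := by
  have h1 : ∀ j : Fin m, |Fj c g j w - Fj c g j w'| = Fj c g j w - Fj c g j w' :=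
    fun j => abs_of_nonneg (sub_nonneg.2 (Fj_mono c g hgm hlip j hw))
  rw [Finset.sum_congr rfl fun j _ => h1 j,
    abs_of_nonneg (sub_nonneg.2 (Gv_mono c g hlip hw)), Finset.sum_sub_distrib]
  have c1 := conservation hm c g hg0 w
  have c2 := conservation hm c g hg0 w'
  linarith

lemma key_lemma {m : ℕ} (hm : 0 < m) (c : ℝ) (g : Fin m → ℝ → ℝ)
    (hg0 : ∀ i y, 0 ≤ g i y) (hgm : ∀ i, Monotone (g i))
    (hlip : ∀ y1 y2 : ℝ, y2 ≤ y1 → ∑ i, (g i y1 - g i y2) ≤ y1 - y2)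
    (w w' : ℝ) :
    (∑ j, |Fj c g j w - Fj c g j w'|) + |Gv c g w - Gv c g w'| ≤ |w - w'| := by
  rcases le_total w' w with h | h
  · rw [abs_of_nonneg (sub_nonneg.2 h)]
    exact key_dir hm c g hg0 hgm hlip h
  · have e2 : |w - w'| = w' - w := by
      rw [abs_sub_comm, abs_of_nonneg (sub_nonneg.2 h)]
    have e : (∑ j, |Fj c g j w - Fj c g j w'|) + |Gv c g w - Gv c g w'|
        = (∑ j, |Fj c g j w' - Fj c g j w|) + |Gv c g w' - Gv c g w| := by
      simp_rw [abs_sub_comm]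
    rw [e2, e]
    exact key_dir hm c g hg0 hgm hlip h

lemma phi_fst {n m : ℕ} (a : Fin n → ℝ) (Ms : Matrix (Fin n) (Fin n) ℝ)
    (Md : Fin m → Matrix (Fin n) (Fin n) ℝ)
    (d : Fin m → (Fin m → Fin n → ℝ) → (Fin n → ℝ) → (Fin n → ℝ))
    (psi : Fin m → Fin n → ℝ → ℝ)
    (hd_eq : ∀ i r s j, d i r s j = psi i j (Ms.mulVec s j + ∑ l, (Md l).mulVec (r l) j))
    (p : (Fin m → Fin n → ℝ) × (Fin n → ℝ)) (i : Fin m) (k : Fin n) :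
    (Phi a Ms Md d p).1 i k
      = Fj (a k) (fun l => psi l k) i (Ms.mulVec p.2 k + ∑ l, (Md l).mulVec (p.1 l) k) := by
  simp only [Phi, Fj]
  split_ifs with h
  · simp only [vmin, Pi.add_apply, Finset.sum_apply, hd_eq]
    rw [add_assoc]
  · simp only [vmin, vpos, Pi.add_apply, Pi.sub_apply, Finset.sum_apply, hd_eq]
    rw [add_assoc]

lemma phi_snd {n m : ℕ} (a : Fin n → ℝ) (Ms : Matrix (Fin n) (Fin n) ℝ)
    (Md : Fin m → Matrix (Fin n) (Fin n) ℝ)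
    (d : Fin m → (Fin m → Fin n → ℝ) → (Fin n → ℝ) → (Fin n → ℝ))
    (psi : Fin m → Fin n → ℝ → ℝ)
    (hd_eq : ∀ i r s j, d i r s j = psi i j (Ms.mulVec s j + ∑ l, (Md l).mulVec (r l) j))
    (p : (Fin m → Fin n → ℝ) × (Fin n → ℝ)) (k : Fin n) :
    (Phi a Ms Md d p).2 k
      = Gv (a k) (fun l => psi l k) (Ms.mulVec p.2 k + ∑ l, (Md l).mulVec (p.1 l) k) := by
  simp only [Phi, Gv, vpos, Pi.add_apply, Pi.sub_apply, Finset.sum_apply, hd_eq]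
  rw [add_assoc]

lemma colsum_le_Imax_s {n m : ℕ} (Ms : Matrix (Fin n) (Fin n) ℝ)
    (Md : Fin m → Matrix (Fin n) (Fin n) ℝ) (j : Fin n) :
    ∑ i, Ms i j ≤ Imax Ms Md :=
  le_trans (le_ciSup (f := fun j => ∑ i, Ms i j) (Finite.bddAbove_range _) j)
    (le_max_left _ _)

lemma colsum_le_Imax_d {n m : ℕ} (Ms : Matrix (Fin n) (Fin n) ℝ)
    (Md : Fin m → Matrix (Fin n) (Fin n) ℝ) (l : Fin m) (j : Fin n) :
    ∑ i, (Md l) i j ≤ Imax Ms Md :=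
  le_trans (le_trans (le_ciSup (f := fun j => ∑ i, (Md l) i j) (Finite.bddAbove_range _) j)
    (le_ciSup (f := fun l => ⨆ j, ∑ i, (Md l) i j) (Finite.bddAbove_range _) l))
    (le_max_right _ _)


/-- Contraction property: under the seniority structure condition, Φ is a strict
contraction with constant I^max < 1 in the ℓ¹-metric. -/
theorem phi_contraction {n m : ℕ} (hn : 0 < n) (hm : 0 < m)
    (a : Fin n → ℝ) (ha : ∀ k, 0 ≤ a k)
    (Ms : Matrix (Fin n) (Fin n) ℝ) (hMs : StrictlyLeftSubstochastic Ms)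
    (Md : Fin m → Matrix (Fin n) (Fin n) ℝ) (hMd : ∀ i, StrictlyLeftSubstochastic (Md i))
    (d : Fin m → (Fin m → Fin n → ℝ) → (Fin n → ℝ) → (Fin n → ℝ))
    (hd : ∀ i r s k, 0 ≤ d i r s k)
    (psi : Fin m → Fin n → ℝ → ℝ)
    (hpsi_nonneg : ∀ i j y, 0 ≤ psi i j y)
    (hpsi_mono : ∀ i j, Monotone (psi i j))
    (hd_eq : ∀ i r s j, d i r s j = psi i j (Ms.mulVec s j + ∑ l, (Md l).mulVec (r l) j))
    (hpsi_lip : ∀ j (y1 y2 : ℝ), y2 ≤ y1 → ∑ i, (psi i j y1 - psi i j y2) ≤ y1 - y2) :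
    (∀ x y : (Fin m → Fin n → ℝ) × (Fin n → ℝ),
      l1P (Phi a Ms Md d x - Phi a Ms Md d y) ≤ Imax Ms Md * l1P (x - y)) ∧
    Imax Ms Md < 1 := by
  constructor
  · intro x y
    set W : ((Fin m → Fin n → ℝ) × (Fin n → ℝ)) → Fin n → ℝ :=
      fun p k => Ms.mulVec p.2 k + ∑ l, (Md l).mulVec (p.1 l) k with hW
    have step1 : l1P (Phi a Ms Md d x - Phi a Ms Md d y)
        ≤ ∑ k, |W x k - W y k| := by
      have expand : l1P (Phi a Ms Md d x - Phi a Ms Md d y)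
          = ∑ k, ((∑ i, |Fj (a k) (fun l => psi l k) i (W x k)
                          - Fj (a k) (fun l => psi l k) i (W y k)|)
              + |Gv (a k) (fun l => psi l k) (W x k)
                  - Gv (a k) (fun l => psi l k) (W y k)|) := by
        calc l1P (Phi a Ms Md d x - Phi a Ms Md d y)
            = (∑ i : Fin m, ∑ k, |Fj (a k) (fun l => psi l k) i (W x k)
                  - Fj (a k) (fun l => psi l k) i (W y k)|)
              + ∑ k, |Gv (a k) (fun l => psi l k) (W x k)
                  - Gv (a k) (fun l => psi l k) (W y k)| := by
              simp only [l1P, l1, Prod.fst_sub, Prod.snd_sub, Pi.sub_apply]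
              congr 1
              · exact Finset.sum_congr rfl fun i _ => Finset.sum_congr rfl fun k _ => by
                  rw [phi_fst a Ms Md d psi hd_eq x i k, phi_fst a Ms Md d psi hd_eq y i k]
              · exact Finset.sum_congr rfl fun k _ => by
                  rw [phi_snd a Ms Md d psi hd_eq x k, phi_snd a Ms Md d psi hd_eq y k]
          _ = ∑ k, ((∑ i, |Fj (a k) (fun l => psi l k) i (W x k)
                          - Fj (a k) (fun l => psi l k) i (W y k)|)
              + |Gv (a k) (fun l => psi l k) (W x k)
                  - Gv (a k) (fun l => psi l k) (W y k)|) := by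
              rw [Finset.sum_comm, ← Finset.sum_add_distrib]
      rw [expand]
      refine Finset.sum_le_sum fun k _ => ?_
      exact key_lemma hm (a k) (fun l => psi l k) (fun i y => hpsi_nonneg i k y)
        (fun i => hpsi_mono i k) (fun y1 y2 h => hpsi_lip k y1 y2 h) (W x k) (W y k)
    have step2 : ∑ k, |W x k - W y k| ≤ Imax Ms Md * l1P (x - y) := by
      have habs : ∀ k, |W x k - W y k|
          ≤ (∑ j, Ms k j * |x.2 j - y.2 j|)
            + ∑ l, ∑ j, (Md l) k j * |x.1 l j - y.1 l j| := by
        intro k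
        have hdiff : W x k - W y k
            = (∑ j, Ms k j * (x.2 j - y.2 j))
              + ∑ l, ∑ j, (Md l) k j * (x.1 l j - y.1 l j) := by
          simp only [hW, Matrix.mulVec, dotProduct, mul_sub, Finset.sum_sub_distrib]
          ring
        rw [hdiff]
        refine le_trans (abs_add_le _ _) (add_le_add ?_ ?_)
        · refine le_trans (Finset.abs_sum_le_sum_abs _ _) (Finset.sum_le_sum fun j _ => ?_)
          rw [abs_mul, abs_of_nonneg (hMs.1 k j)]
        · refine le_trans (Finset.abs_sum_le_sum_abs _ _) (Finset.sum_le_sum fun l _ => ?_)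
          refine le_trans (Finset.abs_sum_le_sum_abs _ _) (Finset.sum_le_sum fun j _ => ?_)
          rw [abs_mul, abs_of_nonneg ((hMd l).1 k j)]
      calc ∑ k, |W x k - W y k|
          ≤ ∑ k, ((∑ j, Ms k j * |x.2 j - y.2 j|)
              + ∑ l, ∑ j, (Md l) k j * |x.1 l j - y.1 l j|) :=
            Finset.sum_le_sum fun k _ => habs k
        _ = (∑ j, (∑ k, Ms k j) * |x.2 j - y.2 j|)
              + ∑ l, ∑ j, (∑ k, (Md l) k j) * |x.1 l j - y.1 l j| := by
            rw [Finset.sum_add_distrib]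
            congr 1
            · rw [Finset.sum_comm]
              exact Finset.sum_congr rfl fun j _ => (Finset.sum_mul _ _ _).symm
            · rw [Finset.sum_comm]
              refine Finset.sum_congr rfl fun l _ => ?_
              rw [Finset.sum_comm]
              exact Finset.sum_congr rfl fun j _ => (Finset.sum_mul _ _ _).symm
        _ ≤ (∑ j, Imax Ms Md * |x.2 j - y.2 j|)
              + ∑ l, ∑ j, Imax Ms Md * |x.1 l j - y.1 l j| := by
            refine add_le_add (Finset.sum_le_sum fun j _ =>
              mul_le_mul_of_nonneg_right (colsum_le_Imax_s Ms Md j) (abs_nonneg _))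
              (Finset.sum_le_sum fun l _ => Finset.sum_le_sum fun j _ =>
                mul_le_mul_of_nonneg_right (colsum_le_Imax_d Ms Md l j) (abs_nonneg _))
        _ = Imax Ms Md * l1P (x - y) := by
            simp only [l1P, l1, Prod.fst_sub, Prod.snd_sub, Pi.sub_apply, ← Finset.mul_sum]
            ring
    exact le_trans step1 step2
  · have hne : Nonempty (Fin n) := Fin.pos_iff_nonempty.mp hn
    have hne' : Nonempty (Fin m) := Fin.pos_iff_nonempty.mp hm
    apply max_lt
    · obtain ⟨j0, hj0⟩ := Finite.exists_max (fun j => ∑ i, Ms i j)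
      exact lt_of_le_of_lt (ciSup_le hj0) (hMs.2 j0)
    · obtain ⟨l0, hl0⟩ := Finite.exists_max (fun l => ⨆ j, ∑ i, (Md l) i j)
      refine lt_of_le_of_lt (ciSup_le hl0) ?_
      obtain ⟨j0, hj0⟩ := Finite.exists_max (fun j => ∑ i, (Md l0) i j)
      exact lt_of_le_of_lt (ciSup_le hj0) ((hMd l0).2 j0)
end
end

section
/- Uniqueness of the no-arbitrage price equilibrium: under the seniority structure condition on the liability functions, the liquidation value system has exactly one solution (r¹,…,r^m,s) ∈ (ℝ^n)^{m+1}. -/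
open Matrix Finset Filter

noncomputable section

private lemma aux0' (P A : ℝ) (hP : 0 ≤ P) :
    min P A = max (min P A) 0 + min A 0 := by
  rcases le_total A 0 with h | h <;> rcases le_total P A with h2 | h2 <;>
    simp [min_def, max_def] <;> split_ifs <;> linarith

private lemma aux1' (P c A : ℝ) (hP : 0 ≤ P) (hc : 0 ≤ c) :
    min P (max (A - c) 0) = max (min (c + P) A) 0 - max (min c A) 0 := by
  rcases le_total A c with h | h <;> rcases le_total A (c + P) with h2 | h2 <;>
    simp [min_def, max_def] <;> split_ifs <;> linarith

private lemma aux2' (c A : ℝ) (hc : 0 ≤ c) :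
    max (A - c) 0 = max A 0 - max (min c A) 0 := by
  rcases le_total A c with h | h <;> rcases le_total A 0 with h2 | h2 <;>
    simp [min_def, max_def] <;> split_ifs <;> linarith

private lemma IioSum {m : ℕ} (f : Fin m → ℝ) (i : Fin m) :
    ∑ l ∈ Finset.Iio i, f l
      = ∑ l ∈ Finset.range (i : ℕ), (if h : l < m then f ⟨l, h⟩ else 0) := by
  rw [show Finset.range (i : ℕ) = Finset.Iio (i : ℕ) from Nat.Iio_eq_range _ |>.symm,
    ← Fin.map_valEmbedding_Iio, Finset.sum_map]
  refine Finset.sum_congr rfl fun l _ => ?_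
  simp [Fin.valEmbedding]

private lemma univSum {m : ℕ} (f : Fin m → ℝ) :
    ∑ l, f l = ∑ l ∈ Finset.range m, (if h : l < m then f ⟨l, h⟩ else 0) := by
  rw [← Fin.sum_univ_eq_sum_range (fun l => if h : l < m then f ⟨l, h⟩ else 0) m]
  exact Finset.sum_congr rfl fun l _ => by rw [dif_pos l.isLt]

/-- Payout to claim `i` at node `j` as a function of incoming value `t`. -/
private def Rf {n m : ℕ} (a : Fin n → ℝ) (psi : Fin m → Fin n → ℝ → ℝ)
    (i : Fin m) (j : Fin n) (t : ℝ) : ℝ :=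
  if (i : ℕ) = 0 then min (psi i j t) (a j + t)
  else min (psi i j t) (max (a j + t - ∑ l ∈ Finset.Iio i, psi l j t) 0)

/-- Equity at node `j` as a function of incoming value `t`. -/
private def Sf {n m : ℕ} (a : Fin n → ℝ) (psi : Fin m → Fin n → ℝ → ℝ)
    (j : Fin n) (t : ℝ) : ℝ :=
  max (a j + t - ∑ l, psi l j t) 0

private lemma sumRS {n m : ℕ} (hm : 0 < m) (a : Fin n → ℝ)
    (psi : Fin m → Fin n → ℝ → ℝ) (hpsi_nonneg : ∀ i j y, 0 ≤ psi i j y)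
    (j : Fin n) (t : ℝ) :
    (∑ i, Rf a psi i j t) + Sf a psi j t = a j + t := by
  classical
  set Ψ : ℕ → ℝ := fun l => if h : l < m then psi ⟨l, h⟩ j t else 0 with hΨ
  have hΨnn : ∀ l, 0 ≤ Ψ l := by
    intro l; rw [hΨ]; dsimp only; split_ifs
    · exact hpsi_nonneg _ _ _
    · exact le_refl 0
  set G : ℕ → ℝ := fun i => max (min (∑ l ∈ Finset.range i, Ψ l) (a j + t)) 0 with hG
  have hcnn : ∀ i, (0:ℝ) ≤ ∑ l ∈ Finset.range i, Ψ l :=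
    fun i => Finset.sum_nonneg fun l _ => hΨnn l
  have hΨval : ∀ i : Fin m, Ψ (i : ℕ) = psi i j t := by
    intro i; rw [hΨ]; simp
  have hstep : ∀ i : Fin m, Rf a psi i j t
      = (G ((i : ℕ) + 1) - G (i : ℕ)) + (if (i : ℕ) = 0 then min (a j + t) 0 else 0) := by
    intro i
    by_cases h0 : (i : ℕ) = 0
    · have h0' : Ψ 0 = psi i j t := h0 ▸ hΨval i
      rw [Rf, if_pos h0, if_pos h0, hG]
      try dsimp only
      rw [h0, Finset.sum_range_one, Finset.sum_range_zero, h0']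
      have e1 := aux0' (psi i j t) (a j + t) (hpsi_nonneg i j t)
      have e2 : max (min (0:ℝ) (a j + t)) 0 = 0 := max_eq_right (min_le_left 0 _)
      linarith [e1, e2]
    · rw [Rf, if_neg h0, if_neg h0, hG]
      try dsimp only
      rw [IioSum (fun l => psi l j t) i, Finset.sum_range_succ]
      simp only [hΨ]
      have hdd : (if h : (i : ℕ) < m then psi ⟨(i : ℕ), h⟩ j t else 0) = psi i j t := by simp
      rw [hdd]
      have hcnn' : (0:ℝ) ≤ ∑ x ∈ Finset.range (i : ℕ),
          (if h : x < m then psi ⟨x, h⟩ j t else 0) := by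
        refine Finset.sum_nonneg fun l _ => ?_
        split_ifs
        · exact hpsi_nonneg _ _ _
        · exact le_refl 0
      have e3 := aux1' (psi i j t) _ (a j + t) (hpsi_nonneg i j t) hcnn'
      linarith [e3]
  have hsum1 : ∑ i, Rf a psi i j t = G m + min (a j + t) 0 := by
    rw [Finset.sum_congr rfl fun i _ => hstep i, Finset.sum_add_distrib]
    have t1 : ∑ i : Fin m, (G ((i : ℕ) + 1) - G (i : ℕ)) = G m - G 0 := by
      rw [Fin.sum_univ_eq_sum_range (fun l => G (l + 1) - G l) m]
      exact Finset.sum_range_sub G m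
    have t2 : ∑ i : Fin m, (if (i : ℕ) = 0 then min (a j + t) 0 else 0) = min (a j + t) 0 := by
      rw [Fin.sum_univ_eq_sum_range (fun l => if l = 0 then min (a j + t) 0 else 0) m]
      rw [Finset.sum_ite_eq' (Finset.range m) 0 (fun _ => min (a j + t) 0)]
      simp [Finset.mem_range, hm]
    have hG0 : G 0 = 0 := by
      rw [hG]; dsimp only
      rw [Finset.sum_range_zero]
      exact max_eq_right (min_le_left 0 _)
    rw [t1, t2, hG0]; ring
  have hsum2 : Sf a psi j t = max (a j + t) 0 - G m := by
    rw [Sf, univSum (fun l => psi l j t), ← hΨ, hG]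
    exact aux2' _ _ (hcnn m)
  rw [hsum1, hsum2]
  have := min_add_max (a j + t) 0
  linarith

private lemma monoRS {n m : ℕ} (a : Fin n → ℝ) (psi : Fin m → Fin n → ℝ → ℝ)
    (hpsi_mono : ∀ i j, Monotone (psi i j))
    (hpsi_lip : ∀ j (y1 y2 : ℝ), y2 ≤ y1 → ∑ i, (psi i j y1 - psi i j y2) ≤ y1 - y2) :
    (∀ i j, Monotone (Rf a psi i j)) ∧ ∀ j, Monotone (Sf a psi j) := by
  have hAC : ∀ (j : Fin n) (I : Finset (Fin m)),
      Monotone (fun t => a j + t - ∑ l ∈ I, psi l j t) := by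
    intro j I t2 t1 h
    try dsimp only
    have h1 : ∑ l ∈ I, (psi l j t1 - psi l j t2) ≤ ∑ l, (psi l j t1 - psi l j t2) :=
      Finset.sum_le_sum_of_subset_of_nonneg (Finset.subset_univ I)
        fun l _ _ => sub_nonneg.2 (hpsi_mono l j h)
    have h2 := hpsi_lip j t1 t2 h
    have h3 : ∑ l ∈ I, (psi l j t1 - psi l j t2)
        = ∑ l ∈ I, psi l j t1 - ∑ l ∈ I, psi l j t2 := Finset.sum_sub_distrib _ _
    linarith
  constructor
  · intro i j t2 t1 h
    rw [Rf, Rf]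
    by_cases h0 : (i : ℕ) = 0
    · rw [if_pos h0, if_pos h0]
      exact min_le_min (hpsi_mono i j h) (by linarith)
    · rw [if_neg h0, if_neg h0]
      exact min_le_min (hpsi_mono i j h) (max_le_max (hAC j (Finset.Iio i) h) le_rfl)
  · intro j t2 t1 h
    rw [Sf, Sf]
    exact max_le_max (hAC j Finset.univ h) le_rfl

private lemma absRS {n m : ℕ} (hm : 0 < m) (a : Fin n → ℝ)
    (psi : Fin m → Fin n → ℝ → ℝ) (hpsi_nonneg : ∀ i j y, 0 ≤ psi i j y)
    (hpsi_mono : ∀ i j, Monotone (psi i j))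
    (hpsi_lip : ∀ j (y1 y2 : ℝ), y2 ≤ y1 → ∑ i, (psi i j y1 - psi i j y2) ≤ y1 - y2)
    (j : Fin n) (t1 t2 : ℝ) :
    (∑ i, |Rf a psi i j t1 - Rf a psi i j t2|) + |Sf a psi j t1 - Sf a psi j t2|
      ≤ |t1 - t2| := by
  obtain ⟨hRmono, hSmono⟩ := monoRS a psi hpsi_mono hpsi_lip
  have key : ∀ s1 s2 : ℝ, s2 ≤ s1 →
      (∑ i, |Rf a psi i j s1 - Rf a psi i j s2|) + |Sf a psi j s1 - Sf a psi j s2|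
        ≤ |s1 - s2| := by
    intro s1 s2 h
    have e1 : ∀ i : Fin m, |Rf a psi i j s1 - Rf a psi i j s2|
        = Rf a psi i j s1 - Rf a psi i j s2 :=
      fun i => abs_of_nonneg (sub_nonneg.2 (hRmono i j h))
    rw [Finset.sum_congr rfl fun i _ => e1 i,
      abs_of_nonneg (sub_nonneg.2 (hSmono j h)), abs_of_nonneg (sub_nonneg.2 h)]
    have q1 := sumRS hm a psi hpsi_nonneg j s1
    have q2 := sumRS hm a psi hpsi_nonneg j s2
    have q3 : ∑ i, (Rf a psi i j s1 - Rf a psi i j s2)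
        = ∑ i, Rf a psi i j s1 - ∑ i, Rf a psi i j s2 := Finset.sum_sub_distrib _ _
    linarith
  rcases le_total t2 t1 with h | h
  · exact key t1 t2 h
  · have := key t2 t1 h
    calc (∑ i, |Rf a psi i j t1 - Rf a psi i j t2|) + |Sf a psi j t1 - Sf a psi j t2|
        = (∑ i, |Rf a psi i j t2 - Rf a psi i j t1|) + |Sf a psi j t2 - Sf a psi j t1| := by
          rw [abs_sub_comm (Sf a psi j t1)]
          congr 1
          exact Finset.sum_congr rfl fun i _ => abs_sub_comm _ _
      _ ≤ |t2 - t1| := this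
      _ = |t1 - t2| := abs_sub_comm _ _

/-- Uniqueness of the no-arbitrage price equilibrium under the seniority structure
condition: the liquidation value system has exactly one solution. -/
theorem existsUnique_liqSystem_solution {n m : ℕ} (hn : 0 < n) (hm : 0 < m)
    (a : Fin n → ℝ) (ha : ∀ k, 0 ≤ a k)
    (Ms : Matrix (Fin n) (Fin n) ℝ) (hMs : StrictlyLeftSubstochastic Ms)
    (Md : Fin m → Matrix (Fin n) (Fin n) ℝ) (hMd : ∀ i, StrictlyLeftSubstochastic (Md i))
    (d : Fin m → (Fin m → Fin n → ℝ) → (Fin n → ℝ) → (Fin n → ℝ))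
    (hd : ∀ i r s k, 0 ≤ d i r s k)
    (psi : Fin m → Fin n → ℝ → ℝ)
    (hpsi_nonneg : ∀ i j y, 0 ≤ psi i j y)
    (hpsi_mono : ∀ i j, Monotone (psi i j))
    (hd_eq : ∀ i r s j, d i r s j = psi i j (Ms.mulVec s j + ∑ l, (Md l).mulVec (r l) j))
    (hpsi_lip : ∀ j (y1 y2 : ℝ), y2 ≤ y1 → ∑ i, (psi i j y1 - psi i j y2) ≤ y1 - y2) :
    ∃! p : (Fin m → Fin n → ℝ) × (Fin n → ℝ), LiqSystem a Ms Md d p.1 p.2 := by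
  classical
  haveI : Nonempty (Fin n) := ⟨⟨0, hn⟩⟩
  haveI : Nonempty (Fin m) := ⟨⟨0, hm⟩⟩
  -- a uniform bound on column sums
  obtain ⟨K, hK0, hK1, hKs, hKd⟩ :
      ∃ K : ℝ, 0 ≤ K ∧ K < 1 ∧ (∀ k, ∑ j, Ms j k ≤ K) ∧ ∀ i k, ∑ j, Md i j k ≤ K := by
    refine ⟨Finset.univ.sup' Finset.univ_nonempty (fun k =>
      max (∑ j, Ms j k) (Finset.univ.sup' Finset.univ_nonempty fun i => ∑ j, Md i j k)),
      ?_, ?_, ?_, ?_⟩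
    · obtain ⟨k⟩ := (inferInstance : Nonempty (Fin n))
      have b1 : (0:ℝ) ≤ ∑ j, Ms j k := Finset.sum_nonneg fun j _ => hMs.1 j k
      have b2 := Finset.le_sup' (f := fun k => max (∑ j, Ms j k)
        (Finset.univ.sup' Finset.univ_nonempty fun i => ∑ j, Md i j k)) (Finset.mem_univ k)
      exact le_trans b1 (le_trans (le_max_left _ _) b2)
    · rw [Finset.sup'_lt_iff]
      intro k _
      rw [max_lt_iff]
      refine ⟨hMs.2 k, ?_⟩
      rw [Finset.sup'_lt_iff]
      exact fun i _ => (hMd i).2 k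
    · intro k
      have b2 := Finset.le_sup' (f := fun k => max (∑ j, Ms j k)
        (Finset.univ.sup' Finset.univ_nonempty fun i => ∑ j, Md i j k)) (Finset.mem_univ k)
      exact le_trans (le_max_left _ _) b2
    · intro i k
      have b2 := Finset.le_sup' (f := fun k => max (∑ j, Ms j k)
        (Finset.univ.sup' Finset.univ_nonempty fun i => ∑ j, Md i j k)) (Finset.mem_univ k)
      have b3 := Finset.le_sup' (f := fun i => ∑ j, Md i j k) (Finset.mem_univ i)
      exact le_trans b3 (le_trans (le_max_right _ _) b2)
  -- the value-update map on ℝ^n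
  set yc : (Fin m → Fin n → ℝ) → (Fin n → ℝ) → (Fin n → ℝ) :=
    fun r s k => Ms.mulVec s k + ∑ l, (Md l).mulVec (r l) k with hycdef
  set Φ0 : (Fin n → ℝ) → (Fin n → ℝ) :=
    fun y => yc (fun i k => Rf a psi i k (y k)) (fun k => Sf a psi k (y k)) with hΦ0def
  have hΦ0lip : ∀ x y : Fin n → ℝ,
      ∑ jj, |Φ0 x jj - Φ0 y jj| ≤ K * ∑ k, |x k - y k| := by
    intro x y
    set Ds : Fin n → ℝ := fun k => |Sf a psi k (x k) - Sf a psi k (y k)| with hDs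
    set Dr : Fin m → Fin n → ℝ := fun i k => |Rf a psi i k (x k) - Rf a psi i k (y k)| with hDr
    have hptwise : ∀ jj, |Φ0 x jj - Φ0 y jj|
        ≤ (∑ k, Ms jj k * Ds k) + ∑ i, ∑ k, Md i jj k * Dr i k := by
      intro jj
      have e : Φ0 x jj - Φ0 y jj
          = (∑ k, Ms jj k * (Sf a psi k (x k) - Sf a psi k (y k)))
            + ∑ i, ∑ k, Md i jj k * (Rf a psi i k (x k) - Rf a psi i k (y k)) := by
        rw [hΦ0def, hycdef]
        simp only [Matrix.mulVec, dotProduct, mul_sub, Finset.sum_sub_distrib]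
        ring
      rw [e]
      refine le_trans (abs_add_le _ _) (add_le_add ?_ ?_)
      · refine le_trans (Finset.abs_sum_le_sum_abs _ _) (Finset.sum_le_sum fun k _ => ?_)
        rw [abs_mul, abs_of_nonneg (hMs.1 jj k)]
      · refine le_trans (Finset.abs_sum_le_sum_abs _ _) (Finset.sum_le_sum fun i _ => ?_)
        refine le_trans (Finset.abs_sum_le_sum_abs _ _) (Finset.sum_le_sum fun k _ => ?_)
        rw [abs_mul, abs_of_nonneg ((hMd i).1 jj k)]
    calc ∑ jj, |Φ0 x jj - Φ0 y jj|
        ≤ ∑ jj, ((∑ k, Ms jj k * Ds k) + ∑ i, ∑ k, Md i jj k * Dr i k) :=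
          Finset.sum_le_sum fun jj _ => hptwise jj
      _ = (∑ k, (∑ jj, Ms jj k) * Ds k) + ∑ i, ∑ k, (∑ jj, Md i jj k) * Dr i k := by
          rw [Finset.sum_add_distrib]
          congr 1
          · rw [Finset.sum_comm]
            exact Finset.sum_congr rfl fun k _ => (Finset.sum_mul _ _ _).symm
          · rw [Finset.sum_comm]
            refine Finset.sum_congr rfl fun i _ => ?_
            rw [Finset.sum_comm]
            exact Finset.sum_congr rfl fun k _ => (Finset.sum_mul _ _ _).symm
      _ ≤ (∑ k, K * Ds k) + ∑ i, ∑ k, K * Dr i k := by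
          refine add_le_add (Finset.sum_le_sum fun k _ => ?_)
            (Finset.sum_le_sum fun i _ => Finset.sum_le_sum fun k _ => ?_)
          · exact mul_le_mul_of_nonneg_right (hKs k) (abs_nonneg _)
          · exact mul_le_mul_of_nonneg_right (hKd i k) (abs_nonneg _)
      _ = K * ∑ k, ((∑ i, Dr i k) + Ds k) := by
          have swap : ∑ i, ∑ k, K * Dr i k = ∑ k, ∑ i, K * Dr i k := Finset.sum_comm
          rw [swap]
          simp only [Finset.mul_sum, mul_add, Finset.sum_add_distrib]
          ring
      _ ≤ K * ∑ k, |x k - y k| := by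
          refine mul_le_mul_of_nonneg_left (Finset.sum_le_sum fun k _ => ?_) hK0
          exact absRS hm a psi hpsi_nonneg hpsi_mono hpsi_lip k (x k) (y k)
  -- Banach fixed point in the ℓ¹ norm
  haveI : Nonempty (PiLp 1 fun _ : Fin n => ℝ) := ⟨0⟩
  have hdist : ∀ x y : PiLp 1 (fun _ : Fin n => ℝ), dist x y = ∑ k, |x k - y k| := by
    intro x y
    rw [PiLp.dist_eq_sum (by norm_num : (0:ℝ) < (1 : ENNReal).toReal)]
    simp [Real.dist_eq]
  have hcontr : ContractingWith ⟨K, hK0⟩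
      (fun y : PiLp 1 (fun _ : Fin n => ℝ) => WithLp.toLp 1 (Φ0 y)) := by
    constructor
    · exact_mod_cast hK1
    · refine LipschitzWith.of_dist_le_mul fun x y => ?_
      rw [hdist, hdist]
      exact hΦ0lip x y
  set ystar : PiLp 1 (fun _ : Fin n => ℝ) :=
    ContractingWith.fixedPoint (fun y => WithLp.toLp 1 (Φ0 y)) hcontr
    with hystardef
  have hystar : Φ0 ystar = ystar := congrArg WithLp.ofLp hcontr.fixedPoint_isFixedPt
  -- correspondence between solutions and fixed points
  have hd_eq' : ∀ r s i k, d i r s k = psi i k (yc r s k) := by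
    intro r s i k
    rw [hd_eq]
  have hycsum : ∀ (r : Fin m → Fin n → ℝ) (s : Fin n → ℝ) (k : Fin n),
      (a + Ms.mulVec s + ∑ i, (Md i).mulVec (r i)) k = a k + yc r s k := by
    intro r s k
    simp only [Pi.add_apply, Finset.sum_apply, hycdef]
    ring
  have solToFix : ∀ r s, LiqSystem a Ms Md d r s →
      (∀ i k, r i k = Rf a psi i k (yc r s k)) ∧ (∀ k, s k = Sf a psi k (yc r s k)) ∧
        Φ0 (yc r s) = yc r s := by
    intro r s hsol
    obtain ⟨e1, e2, e3⟩ := hsol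
    have hs : ∀ k, s k = Sf a psi k (yc r s k) := by
      intro k
      conv_lhs => rw [e3]
      rw [vpos, Sf]
      try dsimp only
      congr 1
      rw [Pi.sub_apply, hycsum r s k, Finset.sum_apply]
      rw [Finset.sum_congr rfl fun i (_ : i ∈ Finset.univ) => hd_eq' r s i k]
    have hr : ∀ i k, r i k = Rf a psi i k (yc r s k) := by
      intro i k
      by_cases h0 : (i : ℕ) = 0
      · conv_lhs => rw [e1 i h0]
        rw [vmin, Rf, if_pos h0]
        try dsimp only
        rw [hd_eq' r s i k, hycsum r s k]
      · conv_lhs => rw [e2 i h0]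
        rw [vmin, Rf, if_neg h0]
        try dsimp only
        rw [hd_eq' r s i k, vpos]
        try dsimp only
        congr 2
        rw [Pi.sub_apply, hycsum r s k, Finset.sum_apply]
        rw [Finset.sum_congr rfl fun l (_ : l ∈ Finset.Iio i) => hd_eq' r s l k]
    refine ⟨hr, hs, ?_⟩
    have hs' : (fun k => Sf a psi k (yc r s k)) = s := funext fun k => (hs k).symm
    have hr' : ∀ i, (fun k => Rf a psi i k (yc r s k)) = r i :=
      fun i => funext fun k => (hr i k).symm
    rw [hΦ0def]
    try dsimp only
    rw [hs']
    congr 1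
    rw [hycdef]
    try dsimp only
    funext k
    congr 1
    exact hr' k
  have fixToSol : ∀ y : Fin n → ℝ, Φ0 y = y →
      LiqSystem a Ms Md d (fun i k => Rf a psi i k (y k)) (fun k => Sf a psi k (y k)) := by
    intro y hy
    set r : Fin m → Fin n → ℝ := fun i k => Rf a psi i k (y k) with hrdef
    set s : Fin n → ℝ := fun k => Sf a psi k (y k) with hsdef
    have hyc : yc r s = y := hy
    refine ⟨?_, ?_, ?_⟩
    · intro j h0
      funext k
      rw [vmin]
      try dsimp only
      rw [hd_eq' r s j k, hycsum r s k, hyc, hrdef]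
      try dsimp only
      rw [Rf, if_pos h0]
    · intro j h0
      funext k
      rw [vmin]
      try dsimp only
      rw [hd_eq' r s j k, vpos]
      try dsimp only
      rw [Pi.sub_apply, hycsum r s k, Finset.sum_apply,
        Finset.sum_congr rfl fun l (_ : l ∈ Finset.Iio j) => hd_eq' r s l k, hyc, hrdef]
      try dsimp only
      rw [Rf, if_neg h0]
    · funext k
      rw [vpos]
      try dsimp only
      rw [Pi.sub_apply, hycsum r s k, Finset.sum_apply,
        Finset.sum_congr rfl fun l (_ : l ∈ Finset.univ) => hd_eq' r s l k, hyc, hsdef]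
      try dsimp only
      rw [Sf]
  -- assemble
  refine ⟨⟨fun i k => Rf a psi i k (ystar k), fun k => Sf a psi k (ystar k)⟩, ?_, ?_⟩
  · exact fixToSol ystar hystar
  · rintro ⟨r, s⟩ hsol
    obtain ⟨hr, hs, hfix⟩ := solToFix r s hsol
    have hyeq : yc r s = ystar :=
      congrArg WithLp.ofLp (hcontr.fixedPoint_unique (x := WithLp.toLp 1 (yc r s))
        (congrArg (WithLp.toLp 1) hfix))
    have : r = fun i k => Rf a psi i k (ystar k) := by
      funext i k
      rw [hr i k, ← hyeq]
    have hseq : s = fun k => Sf a psi k (ystar k) := by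
      funext k
      rw [hs k, ← hyeq]
    rw [Prod.mk.injEq]
    exact ⟨this, hseq⟩
end
end

section
/- Convergence of the Picard iteration (pricing algorithm): under the seniority structure condition, letting Φ : ℝ^{n(m+1)} → ℝ^{n(m+1)} denote the map sending (r¹,…,r^m,s) to the tuple of right-hand sides of the liquidation value system, for every starting point x₀ ∈ ℝ^{n(m+1)} the iterates Φ^k(x₀) converge as k → ∞ (in the ℓ¹-norm) to the unique solution of the liquidation value system. -/
open Matrix Finset Filter

noncomputable section

/-! ### Auxiliary scalar lemmas -/

lemma min_max_sub (u t s : ℝ) (hs : 0 ≤ s) :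
    min s (max (u - t) 0) = min u (t + s) - min u t := by
  rcases le_total u t with h | h <;> rcases le_total u (t + s) with h2 | h2 <;>
    rcases le_total s (u - t) with h3 | h3 <;>
    simp [min_def, max_def] <;> split_ifs <;> linarith

lemma max_sub_min (u t : ℝ) : max (u - t) 0 = u - min u t := by
  rcases le_total u t with h | h <;> simp [min_def, max_def] <;> split_ifs <;> linarith

/-! ### The scalar waterfall at a single node -/

section Node
variable {m : ℕ} (a : ℝ) (ψ : Fin m → ℝ → ℝ)

/-- payout of tranche i at cash y -/
def Ofun (i : Fin m) (y : ℝ) : ℝ :=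
  if (i : ℕ) = 0 then min (ψ i y) (a + y)
  else min (ψ i y) (max (a + y - ∑ l ∈ Finset.Iio i, ψ l y) 0)

/-- equity at cash y -/
def Efun (y : ℝ) : ℝ := max (a + y - ∑ i, ψ i y) 0

lemma Iio_eq (i : Fin m) :
    Finset.Iio i = Finset.univ.filter (fun l : Fin m => (l : ℕ) < (i : ℕ)) := by
  ext l
  simp only [Finset.mem_Iio, Finset.mem_filter, Finset.mem_univ, true_and, Fin.lt_def]

lemma sum_Ofun_add_Efun (hm : 0 < m) (hnn : ∀ i y, 0 ≤ ψ i y) (y : ℝ) :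
    (∑ i, Ofun a ψ i y) + Efun a ψ y = a + y := by
  classical
  set T : ℕ → ℝ := fun k => ∑ l ∈ Finset.univ.filter (fun l : Fin m => (l : ℕ) < k), ψ l y with hT
  set c : ℕ → ℝ := fun k => if k = 0 then 0 else min (a + y) (T k) with hc
  have hOeq : ∀ i : Fin m, Ofun a ψ i y = c ((i : ℕ) + 1) - c (i : ℕ) := by
    intro i
    by_cases h0 : (i : ℕ) = 0
    · have hfil : Finset.univ.filter (fun l : Fin m => (l : ℕ) < 1) = {i} := by
        ext l
        simp only [Finset.mem_filter, Finset.mem_univ, true_and, Finset.mem_singleton,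
          Nat.lt_one_iff]
        rw [Fin.ext_iff, h0]
      simp only [Ofun, h0, hc, hT, if_pos rfl, hfil, Finset.sum_singleton]
      simp [min_comm]
    · have hins : Finset.univ.filter (fun l : Fin m => (l : ℕ) < (i : ℕ) + 1)
          = insert i (Finset.univ.filter (fun l : Fin m => (l : ℕ) < (i : ℕ))) := by
        ext l
        simp [Nat.lt_succ_iff_lt_or_eq, Fin.ext_iff, or_comm]
        rw [Fin.le_def, Fin.lt_def]; omega
      have hnotmem : i ∉ Finset.univ.filter (fun l : Fin m => (l : ℕ) < (i : ℕ)) := by simp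
      have hTsucc : T ((i : ℕ) + 1) = T (i : ℕ) + ψ i y := by
        rw [hT]; simp only [hins, Finset.sum_insert hnotmem]; ring
      simp only [Ofun, if_neg h0, hc, if_neg (Nat.succ_ne_zero _), if_neg h0, Iio_eq, hTsucc]
      exact min_max_sub (a + y) (T (i : ℕ)) (ψ i y) (hnn i y)
  have hsum : ∑ i, Ofun a ψ i y = c m - c 0 := by
    calc ∑ i : Fin m, Ofun a ψ i y = ∑ i : Fin m, (fun k => c (k + 1) - c k) (i : ℕ) := by
          exact Finset.sum_congr rfl fun i _ => hOeq i
      _ = ∑ k ∈ Finset.range m, (c (k + 1) - c k) :=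
          Fin.sum_univ_eq_sum_range (fun k => c (k + 1) - c k) m
      _ = c m - c 0 := Finset.sum_range_sub c m
  have hTm : T m = ∑ i, ψ i y := by
    rw [hT]
    apply Finset.sum_congr _ (fun _ _ => rfl)
    apply Finset.filter_true_of_mem
    intro l _; exact l.isLt
  have hm0 : m ≠ 0 := hm.ne'
  have hE : Efun a ψ y = (a + y) - c m := by
    have : c m = min (a + y) (T m) := by simp [hc, hm0]
    rw [Efun, this, ← hTm]
    exact max_sub_min (a + y) (T m)
  have hc0 : c 0 = 0 := by simp [hc]
  rw [hsum, hE, hc0]; ring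

lemma Ofun_mono (hmono : ∀ i, Monotone (ψ i))
    (hlip : ∀ y1 y2 : ℝ, y2 ≤ y1 → ∑ i, (ψ i y1 - ψ i y2) ≤ y1 - y2)
    {y y' : ℝ} (h : y' ≤ y) (i : Fin m) : Ofun a ψ i y' ≤ Ofun a ψ i y := by
  have hkey : ∀ t : Finset (Fin m), ∑ l ∈ t, (ψ l y - ψ l y') ≤ y - y' :=
    fun t => le_trans (Finset.sum_le_sum_of_subset_of_nonneg (Finset.subset_univ t)
      (fun l _ _ => sub_nonneg.2 (hmono l h))) (hlip y y' h)
  unfold Ofun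
  by_cases h0 : (i : ℕ) = 0
  · rw [if_pos h0, if_pos h0]
    exact min_le_min (hmono i h) (by linarith)
  · rw [if_neg h0, if_neg h0]
    refine min_le_min (hmono i h) (max_le_max ?_ le_rfl)
    have := hkey (Finset.Iio i)
    rw [Finset.sum_sub_distrib] at this
    linarith

lemma Efun_mono (hmono : ∀ i, Monotone (ψ i))
    (hlip : ∀ y1 y2 : ℝ, y2 ≤ y1 → ∑ i, (ψ i y1 - ψ i y2) ≤ y1 - y2)
    {y y' : ℝ} (h : y' ≤ y) : Efun a ψ y' ≤ Efun a ψ y := by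
  unfold Efun
  refine max_le_max ?_ le_rfl
  have := hlip y y' h
  rw [Finset.sum_sub_distrib] at this
  linarith

lemma node_bound (hm : 0 < m) (hmono : ∀ i, Monotone (ψ i)) (hnn : ∀ i y, 0 ≤ ψ i y)
    (hlip : ∀ y1 y2 : ℝ, y2 ≤ y1 → ∑ i, (ψ i y1 - ψ i y2) ≤ y1 - y2)
    (y y' : ℝ) :
    (∑ i, |Ofun a ψ i y - Ofun a ψ i y'|) + |Efun a ψ y - Efun a ψ y'| ≤ |y - y'| := by
  have main : ∀ z z' : ℝ, z' ≤ z →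
      (∑ i, |Ofun a ψ i z - Ofun a ψ i z'|) + |Efun a ψ z - Efun a ψ z'| ≤ |z - z'| := by
    intro z z' hzz
    have h1 : ∀ i : Fin m, |Ofun a ψ i z - Ofun a ψ i z'| = Ofun a ψ i z - Ofun a ψ i z' :=
      fun i => abs_of_nonneg (sub_nonneg.2 (Ofun_mono a ψ hmono hlip hzz i))
    have h2 : |Efun a ψ z - Efun a ψ z'| = Efun a ψ z - Efun a ψ z' :=
      abs_of_nonneg (sub_nonneg.2 (Efun_mono a ψ hmono hlip hzz))
    rw [Finset.sum_congr rfl (fun i _ => h1 i), h2, Finset.sum_sub_distrib,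
      abs_of_nonneg (sub_nonneg.2 hzz)]
    have e1 := sum_Ofun_add_Efun a ψ hm hnn z
    have e2 := sum_Ofun_add_Efun a ψ hm hnn z'
    linarith
  rcases le_total y' y with h | h
  · exact main y y' h
  · have := main y' y h
    rw [abs_sub_comm y y']
    calc (∑ i, |Ofun a ψ i y - Ofun a ψ i y'|) + |Efun a ψ y - Efun a ψ y'|
        = (∑ i, |Ofun a ψ i y' - Ofun a ψ i y|) + |Efun a ψ y' - Efun a ψ y| := by
          simp [abs_sub_comm]
      _ ≤ |y' - y| := this

end Node

/-! ### Properties of the ℓ¹ norm -/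

lemma l1_nonneg {n : ℕ} (v : Fin n → ℝ) : 0 ≤ l1 v :=
  Finset.sum_nonneg fun _ _ => abs_nonneg _

lemma l1P_nonneg {n m : ℕ} (x : (Fin m → Fin n → ℝ) × (Fin n → ℝ)) : 0 ≤ l1P x :=
  add_nonneg (Finset.sum_nonneg fun _ _ => l1_nonneg _) (l1_nonneg _)

lemma l1_eq_zero {n : ℕ} {v : Fin n → ℝ} (h : l1 v = 0) : v = 0 := by
  funext k
  have := (Finset.sum_eq_zero_iff_of_nonneg (fun i _ => abs_nonneg (v i))).1 h k (Finset.mem_univ k)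
  simpa [abs_eq_zero] using this

lemma l1P_eq_zero {n m : ℕ} {x : (Fin m → Fin n → ℝ) × (Fin n → ℝ)} (h : l1P x = 0) : x = 0 := by
  have hA : 0 ≤ ∑ i, l1 (x.1 i) := Finset.sum_nonneg fun _ _ => l1_nonneg _
  have hB : 0 ≤ l1 x.2 := l1_nonneg _
  rw [l1P] at h
  have h1 : ∑ i, l1 (x.1 i) = 0 := by linarith
  have h2 : l1 x.2 = 0 := by linarith
  have h3 : ∀ i : Fin m, l1 (x.1 i) = 0 :=
    (Finset.sum_eq_zero_iff_of_nonneg fun i _ => l1_nonneg _).1 h1 |> fun h i => h i (Finset.mem_univ i)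
  have : x.1 = 0 := funext fun i => l1_eq_zero (h3 i)
  have h4 : x.2 = 0 := l1_eq_zero h2
  exact Prod.ext_iff.2 ⟨this, h4⟩

lemma l1P_sub_symm {n m : ℕ} (u v : (Fin m → Fin n → ℝ) × (Fin n → ℝ)) :
    l1P (u - v) = l1P (v - u) := by
  simp [l1P, l1, abs_sub_comm]

lemma l1P_tri {n m : ℕ} (u v w : (Fin m → Fin n → ℝ) × (Fin n → ℝ)) :
    l1P (u - w) ≤ l1P (u - v) + l1P (v - w) := by
  simp only [l1P, l1, Prod.fst_sub, Prod.snd_sub, Pi.sub_apply]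
  have h1 : ∀ i : Fin m, ∑ k, |u.1 i k - w.1 i k| ≤
      (∑ k, |u.1 i k - v.1 i k|) + ∑ k, |v.1 i k - w.1 i k| := by
    intro i
    rw [← Finset.sum_add_distrib]
    exact Finset.sum_le_sum fun k _ => abs_sub_le _ _ _
  have h2 : ∑ k, |u.2 k - w.2 k| ≤ (∑ k, |u.2 k - v.2 k|) + ∑ k, |v.2 k - w.2 k| := by
    rw [← Finset.sum_add_distrib]
    exact Finset.sum_le_sum fun k _ => abs_sub_le _ _ _
  have h3 := Finset.sum_le_sum (fun i (_ : i ∈ Finset.univ) => h1 i)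
  rw [Finset.sum_add_distrib] at h3
  linarith

lemma norm_le_l1P {n m : ℕ} (x : (Fin m → Fin n → ℝ) × (Fin n → ℝ)) : ‖x‖ ≤ l1P x := by
  have habs1 : ∀ (i : Fin m) (j : Fin n), |x.1 i j| ≤ l1P x := by
    intro i j
    have h1 : |x.1 i j| ≤ l1 (x.1 i) := by
      rw [l1]
      exact Finset.single_le_sum (f := fun k => |x.1 i k|) (fun k _ => abs_nonneg _)
        (Finset.mem_univ j)
    have h2 : l1 (x.1 i) ≤ ∑ i', l1 (x.1 i') :=
      Finset.single_le_sum (f := fun i' => l1 (x.1 i')) (fun k _ => l1_nonneg _)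
        (Finset.mem_univ i)
    have := l1_nonneg x.2
    rw [l1P]; linarith
  have habs2 : ∀ j : Fin n, |x.2 j| ≤ l1P x := by
    intro j
    have h1 : |x.2 j| ≤ l1 x.2 := by
      rw [l1]
      exact Finset.single_le_sum (f := fun k => |x.2 k|) (fun k _ => abs_nonneg _)
        (Finset.mem_univ j)
    have h2 : 0 ≤ ∑ i', l1 (x.1 i') := Finset.sum_nonneg fun _ _ => l1_nonneg _
    rw [l1P]; linarith
  rw [Prod.norm_def]
  apply max_le
  · rw [pi_norm_le_iff_of_nonneg (l1P_nonneg x)]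
    intro i
    rw [pi_norm_le_iff_of_nonneg (l1P_nonneg x)]
    intro j
    simpa [Real.norm_eq_abs] using habs1 i j
  · rw [pi_norm_le_iff_of_nonneg (l1P_nonneg x)]
    intro j
    simpa [Real.norm_eq_abs] using habs2 j

lemma l1P_le_norm {n m : ℕ} (x : (Fin m → Fin n → ℝ) × (Fin n → ℝ)) :
    l1P x ≤ ((m : ℝ) * n + n) * ‖x‖ := by
  have hb : ∀ (i : Fin m) (j : Fin n), |x.1 i j| ≤ ‖x‖ := by
    intro i j
    calc |x.1 i j| = ‖x.1 i j‖ := (Real.norm_eq_abs _).symm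
      _ ≤ ‖x.1 i‖ := norm_le_pi_norm (x.1 i) j
      _ ≤ ‖x.1‖ := norm_le_pi_norm x.1 i
      _ ≤ ‖x‖ := norm_fst_le x
  have hb2 : ∀ j : Fin n, |x.2 j| ≤ ‖x‖ := by
    intro j
    calc |x.2 j| = ‖x.2 j‖ := (Real.norm_eq_abs _).symm
      _ ≤ ‖x.2‖ := norm_le_pi_norm x.2 j
      _ ≤ ‖x‖ := norm_snd_le x
  have h1 : ∀ i : Fin m, l1 (x.1 i) ≤ (n : ℝ) * ‖x‖ := by
    intro i
    calc l1 (x.1 i) = ∑ j, |x.1 i j| := rfl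
      _ ≤ ∑ _j : Fin n, ‖x‖ := Finset.sum_le_sum fun j _ => hb i j
      _ = (n : ℝ) * ‖x‖ := by simp [mul_comm]
  have h2 : l1 x.2 ≤ (n : ℝ) * ‖x‖ := by
    calc l1 x.2 = ∑ j, |x.2 j| := rfl
      _ ≤ ∑ _j : Fin n, ‖x‖ := Finset.sum_le_sum fun j _ => hb2 j
      _ = (n : ℝ) * ‖x‖ := by simp [mul_comm]
  have h3 : ∑ i, l1 (x.1 i) ≤ (m : ℝ) * ((n : ℝ) * ‖x‖) := by
    calc ∑ i, l1 (x.1 i) ≤ ∑ _i : Fin m, (n : ℝ) * ‖x‖ := Finset.sum_le_sum fun i _ => h1 i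
      _ = (m : ℝ) * ((n : ℝ) * ‖x‖) := by simp [mul_comm]
  rw [l1P]; ring_nf; nlinarith [norm_nonneg x]

/-- Convergence of the Picard iteration: under the seniority structure condition the
iterates of Φ converge in ℓ¹-norm, from any starting point, to the unique solution of
the liquidation value system. -/
theorem picard_iteration_converges {n m : ℕ} (hn : 0 < n) (hm : 0 < m)
    (a : Fin n → ℝ) (ha : ∀ k, 0 ≤ a k)
    (Ms : Matrix (Fin n) (Fin n) ℝ) (hMs : StrictlyLeftSubstochastic Ms)
    (Md : Fin m → Matrix (Fin n) (Fin n) ℝ) (hMd : ∀ i, StrictlyLeftSubstochastic (Md i))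
    (d : Fin m → (Fin m → Fin n → ℝ) → (Fin n → ℝ) → (Fin n → ℝ))
    (hd : ∀ i r s k, 0 ≤ d i r s k)
    (psi : Fin m → Fin n → ℝ → ℝ)
    (hpsi_nonneg : ∀ i j y, 0 ≤ psi i j y)
    (hpsi_mono : ∀ i j, Monotone (psi i j))
    (hd_eq : ∀ i r s j, d i r s j = psi i j (Ms.mulVec s j + ∑ l, (Md l).mulVec (r l) j))
    (hpsi_lip : ∀ j (y1 y2 : ℝ), y2 ≤ y1 → ∑ i, (psi i j y1 - psi i j y2) ≤ y1 - y2) :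
    ∃ p : (Fin m → Fin n → ℝ) × (Fin n → ℝ),
      LiqSystem a Ms Md d p.1 p.2 ∧
      (∀ q : (Fin m → Fin n → ℝ) × (Fin n → ℝ), LiqSystem a Ms Md d q.1 q.2 → q = p) ∧
      ∀ x0 : (Fin m → Fin n → ℝ) × (Fin n → ℝ),
        Tendsto (fun k => l1P ((Phi a Ms Md d)^[k] x0 - p)) atTop (nhds 0) := by
  classical
  haveI : NeZero n := ⟨hn.ne'⟩
  haveI : NeZero m := ⟨hm.ne'⟩
  -- the contraction constant
  obtain ⟨c, hc0, hc1, hMscol, hMdcol⟩ :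
      ∃ c : ℝ, 0 ≤ c ∧ c < 1 ∧ (∀ k, ∑ i, Ms i k ≤ c) ∧ ∀ l k, ∑ i, (Md l) i k ≤ c := by
    obtain ⟨k0, hk0⟩ := Finite.exists_max (fun k : Fin n => ∑ i, Ms i k)
    obtain ⟨lk0, hlk0⟩ := Finite.exists_max (fun lk : Fin m × Fin n => ∑ i, (Md lk.1) i lk.2)
    refine ⟨max (∑ i, Ms i k0) (∑ i, (Md lk0.1) i lk0.2),
      le_trans (Finset.sum_nonneg fun i _ => hMs.1 i k0) (le_max_left _ _),
      max_lt (hMs.2 k0) ((hMd lk0.1).2 lk0.2),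
      fun k => le_trans (hk0 k) (le_max_left _ _),
      fun l k => le_trans (hlk0 (l, k)) (le_max_right _ _)⟩
  set Φ : ((Fin m → Fin n → ℝ) × (Fin n → ℝ)) → ((Fin m → Fin n → ℝ) × (Fin n → ℝ)) :=
    Phi a Ms Md d with hΦ
  set Y : ((Fin m → Fin n → ℝ) × (Fin n → ℝ)) → Fin n → ℝ :=
    fun p j => Ms.mulVec p.2 j + ∑ l, (Md l).mulVec (p.1 l) j with hY
  -- identification of the components of Φ with the scalar waterfall
  have hr : ∀ p (i : Fin m) (j : Fin n),
      (Φ p).1 i j = Ofun (a j) (fun i' y => psi i' j y) i (Y p j) := by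
    intro p i j
    by_cases h0 : (i : ℕ) = 0 <;>
      simp only [hΦ, Phi, h0, if_true, if_false, ↓reduceIte] <;>
      simp [hΦ, Phi, Ofun, vmin, vpos, h0, hd_eq, hY, Finset.sum_apply, Pi.add_apply,
        Pi.sub_apply, add_assoc]
  have hs : ∀ p (j : Fin n),
      (Φ p).2 j = Efun (a j) (fun i' y => psi i' j y) (Y p j) := by
    intro p j
    simp [hΦ, Phi, Efun, vpos, hd_eq, hY, Finset.sum_apply, Pi.add_apply, Pi.sub_apply,
      add_assoc]
  -- per node estimate
  have node : ∀ p q (j : Fin n),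
      (∑ i, |(Φ p).1 i j - (Φ q).1 i j|) + |(Φ p).2 j - (Φ q).2 j| ≤ |Y p j - Y q j| := by
    intro p q j
    have := node_bound (a j) (fun i' y => psi i' j y) hm (fun i' => hpsi_mono i' j)
      (fun i' y => hpsi_nonneg i' j y) (fun y1 y2 h => hpsi_lip j y1 y2 h) (Y p j) (Y q j)
    calc (∑ i, |(Φ p).1 i j - (Φ q).1 i j|) + |(Φ p).2 j - (Φ q).2 j|
        = (∑ i, |Ofun (a j) (fun i' y => psi i' j y) i (Y p j)
            - Ofun (a j) (fun i' y => psi i' j y) i (Y q j)|)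
          + |Efun (a j) (fun i' y => psi i' j y) (Y p j)
            - Efun (a j) (fun i' y => psi i' j y) (Y q j)| := by
          rw [hs p j, hs q j]
          exact congrArg₂ (· + ·) (Finset.sum_congr rfl fun i _ => by rw [hr p i j, hr q i j]) rfl
      _ ≤ |Y p j - Y q j| := this
  -- the Y-difference estimate
  have hYb : ∀ p q (j : Fin n), |Y p j - Y q j| ≤
      (∑ k, Ms j k * |p.2 k - q.2 k|) + ∑ l, ∑ k, (Md l) j k * |p.1 l k - q.1 l k| := by
    intro p q j
    have hexp : Y p j - Y q j =
        (∑ k, Ms j k * (p.2 k - q.2 k)) + ∑ l, ∑ k, (Md l) j k * (p.1 l k - q.1 l k) := by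
      simp only [hY, Matrix.mulVec, dotProduct, mul_sub, Finset.sum_sub_distrib]
      ring
    rw [hexp]
    calc |(∑ k, Ms j k * (p.2 k - q.2 k)) + ∑ l, ∑ k, (Md l) j k * (p.1 l k - q.1 l k)|
        ≤ |∑ k, Ms j k * (p.2 k - q.2 k)| + |∑ l, ∑ k, (Md l) j k * (p.1 l k - q.1 l k)| :=
          abs_add_le _ _
      _ ≤ (∑ k, Ms j k * |p.2 k - q.2 k|) + ∑ l, ∑ k, (Md l) j k * |p.1 l k - q.1 l k| := by
          refine add_le_add ?_ ?_
          · refine le_trans (Finset.abs_sum_le_sum_abs _ _) (Finset.sum_le_sum fun k _ => ?_)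
            rw [abs_mul, abs_of_nonneg (hMs.1 j k)]
          · refine le_trans (Finset.abs_sum_le_sum_abs _ _) (Finset.sum_le_sum fun l _ => ?_)
            refine le_trans (Finset.abs_sum_le_sum_abs _ _) (Finset.sum_le_sum fun k _ => ?_)
            rw [abs_mul, abs_of_nonneg ((hMd l).1 j k)]
  -- the contraction property
  have hLip : ∀ p q, l1P (Φ p - Φ q) ≤ c * l1P (p - q) := by
    intro p q
    have expand : l1P (Φ p - Φ q) =
        ∑ j, ((∑ i, |(Φ p).1 i j - (Φ q).1 i j|) + |(Φ p).2 j - (Φ q).2 j|) := by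
      rw [l1P]
      simp only [l1, Prod.fst_sub, Prod.snd_sub, Pi.sub_apply]
      rw [Finset.sum_comm, ← Finset.sum_add_distrib]
    rw [expand]
    have step1 : ∑ j, ((∑ i, |(Φ p).1 i j - (Φ q).1 i j|) + |(Φ p).2 j - (Φ q).2 j|)
        ≤ ∑ j, |Y p j - Y q j| := Finset.sum_le_sum fun j _ => node p q j
    have step2 : ∑ j, |Y p j - Y q j| ≤
        ∑ j, ((∑ k, Ms j k * |p.2 k - q.2 k|)
          + ∑ l, ∑ k, (Md l) j k * |p.1 l k - q.1 l k|) :=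
      Finset.sum_le_sum fun j _ => hYb p q j
    have step3 : ∑ j, ((∑ k, Ms j k * |p.2 k - q.2 k|)
          + ∑ l, ∑ k, (Md l) j k * |p.1 l k - q.1 l k|)
        ≤ c * l1P (p - q) := by
      rw [Finset.sum_add_distrib]
      have e1 : ∑ j, ∑ k, Ms j k * |p.2 k - q.2 k| = ∑ k, (∑ j, Ms j k) * |p.2 k - q.2 k| := by
        rw [Finset.sum_comm]
        exact Finset.sum_congr rfl fun k _ => (Finset.sum_mul _ _ _).symm
      have e2 : ∑ j, ∑ l, ∑ k, (Md l) j k * |p.1 l k - q.1 l k|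
          = ∑ l, ∑ k, (∑ j, (Md l) j k) * |p.1 l k - q.1 l k| := by
        rw [Finset.sum_comm]
        refine Finset.sum_congr rfl fun l _ => ?_
        rw [Finset.sum_comm]
        exact Finset.sum_congr rfl fun k _ => (Finset.sum_mul _ _ _).symm
      rw [e1, e2]
      have b1 : ∑ k, (∑ j, Ms j k) * |p.2 k - q.2 k| ≤ ∑ k, c * |p.2 k - q.2 k| :=
        Finset.sum_le_sum fun k _ => mul_le_mul_of_nonneg_right (hMscol k) (abs_nonneg _)
      have b2 : ∑ l, ∑ k, (∑ j, (Md l) j k) * |p.1 l k - q.1 l k|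
          ≤ ∑ l, ∑ k, c * |p.1 l k - q.1 l k| :=
        Finset.sum_le_sum fun l _ => Finset.sum_le_sum fun k _ =>
          mul_le_mul_of_nonneg_right (hMdcol l k) (abs_nonneg _)
      have final : (∑ k, c * |p.2 k - q.2 k|) + ∑ l, ∑ k, c * |p.1 l k - q.1 l k|
          = c * l1P (p - q) := by
        rw [l1P]
        simp only [l1, Prod.fst_sub, Prod.snd_sub, Pi.sub_apply, Finset.mul_sum, mul_add]
        ring
      linarith
    linarith
  -- iteration estimate
  have hiter : ∀ (k : ℕ) u v, l1P (Φ^[k] u - Φ^[k] v) ≤ c ^ k * l1P (u - v) := by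
    intro k
    induction k with
    | zero => intro u v; simp
    | succ k ih =>
      intro u v
      calc l1P (Φ^[k + 1] u - Φ^[k + 1] v) = l1P (Φ (Φ^[k] u) - Φ (Φ^[k] v)) := by
            rw [Function.iterate_succ_apply', Function.iterate_succ_apply']
        _ ≤ c * l1P (Φ^[k] u - Φ^[k] v) := hLip _ _
        _ ≤ c * (c ^ k * l1P (u - v)) := mul_le_mul_of_nonneg_left (ih u v) hc0
        _ = c ^ (k + 1) * l1P (u - v) := by ring
  -- the Picard iterates from 0 form a Cauchy sequence
  have hcauchy : CauchySeq (fun k => Φ^[k] (0 : (Fin m → Fin n → ℝ) × (Fin n → ℝ))) := by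
    apply cauchySeq_of_le_geometric c (l1P ((0 : (Fin m → Fin n → ℝ) × (Fin n → ℝ)) - Φ 0)) hc1
    intro k
    rw [dist_eq_norm]
    calc ‖Φ^[k] 0 - Φ^[k + 1] 0‖ = ‖Φ^[k] 0 - Φ^[k] (Φ 0)‖ := by
          rw [Function.iterate_succ_apply]
      _ ≤ l1P (Φ^[k] 0 - Φ^[k] (Φ 0)) := norm_le_l1P _
      _ ≤ c ^ k * l1P (0 - Φ 0) := hiter k 0 (Φ 0)
      _ = l1P (0 - Φ 0) * c ^ k := mul_comm _ _
  obtain ⟨p, hp⟩ := cauchySeq_tendsto_of_complete hcauchy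
  -- l1P-convergence of the iterates from 0
  have hpl1 : Tendsto (fun k => l1P (Φ^[k] 0 - p)) atTop (nhds 0) := by
    have hnorm : Tendsto (fun k => ‖Φ^[k] 0 - p‖) atTop (nhds 0) :=
      tendsto_iff_norm_sub_tendsto_zero.mp hp
    have := hnorm.const_mul ((m : ℝ) * n + n)
    rw [mul_zero] at this
    exact squeeze_zero (fun k => l1P_nonneg _) (fun k => l1P_le_norm _) this
  -- p is a fixed point
  have hfix : Φ p = p := by
    have h1 : ∀ k : ℕ, l1P (Φ p - p) ≤ c * l1P (Φ^[k] 0 - p) + l1P (Φ^[k + 1] 0 - p) := by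
      intro k
      calc l1P (Φ p - p) ≤ l1P (Φ p - Φ^[k + 1] 0) + l1P (Φ^[k + 1] 0 - p) := l1P_tri _ _ _
        _ ≤ c * l1P (Φ^[k] 0 - p) + l1P (Φ^[k + 1] 0 - p) := by
            refine add_le_add_left ?_ _
            rw [Function.iterate_succ_apply']
            calc l1P (Φ p - Φ (Φ^[k] 0)) ≤ c * l1P (p - Φ^[k] 0) := hLip _ _
              _ = c * l1P (Φ^[k] 0 - p) := by rw [l1P_sub_symm]
    have h2 : Tendsto (fun k : ℕ => c * l1P (Φ^[k] 0 - p) + l1P (Φ^[k + 1] 0 - p))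
        atTop (nhds 0) := by
      have ha1 := hpl1.const_mul c
      rw [mul_zero] at ha1
      have ha2 : Tendsto (fun k : ℕ => l1P (Φ^[k + 1] 0 - p)) atTop (nhds 0) :=
        hpl1.comp (tendsto_add_atTop_nat 1)
      simpa using ha1.add ha2
    have hle : l1P (Φ p - p) ≤ 0 := ge_of_tendsto' h2 h1
    have := l1P_eq_zero (le_antisymm hle (l1P_nonneg _))
    exact sub_eq_zero.mp this
  -- fixed points are exactly the solutions of the liquidation value system
  have hLiq_iff : ∀ q : (Fin m → Fin n → ℝ) × (Fin n → ℝ),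
      Φ q = q ↔ LiqSystem a Ms Md d q.1 q.2 := by
    intro q
    constructor
    · intro h
      have h1 := congrArg Prod.fst h
      have h2 := congrArg Prod.snd h
      refine ⟨?_, ?_, ?_⟩
      · intro j hj
        have := congrFun h1 j
        rw [show (Φ q).1 j = if (j : ℕ) = 0 then
            vmin (d j q.1 q.2) (a + Ms.mulVec q.2 + ∑ i, (Md i).mulVec (q.1 i))
          else vmin (d j q.1 q.2) (vpos (a + Ms.mulVec q.2 + ∑ i, (Md i).mulVec (q.1 i) -
            ∑ i ∈ Finset.Iio j, d i q.1 q.2)) from rfl, if_pos hj] at this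
        exact this.symm
      · intro j hj
        have := congrFun h1 j
        rw [show (Φ q).1 j = if (j : ℕ) = 0 then
            vmin (d j q.1 q.2) (a + Ms.mulVec q.2 + ∑ i, (Md i).mulVec (q.1 i))
          else vmin (d j q.1 q.2) (vpos (a + Ms.mulVec q.2 + ∑ i, (Md i).mulVec (q.1 i) -
            ∑ i ∈ Finset.Iio j, d i q.1 q.2)) from rfl, if_neg hj] at this
        exact this.symm
      · exact h2.symm
    · rintro ⟨h1, h2, h3⟩
      refine Prod.ext_iff.2 ⟨funext fun j => ?_, h3.symm⟩
      by_cases hj : (j : ℕ) = 0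
      · rw [show (Φ q).1 j = if (j : ℕ) = 0 then
            vmin (d j q.1 q.2) (a + Ms.mulVec q.2 + ∑ i, (Md i).mulVec (q.1 i))
          else vmin (d j q.1 q.2) (vpos (a + Ms.mulVec q.2 + ∑ i, (Md i).mulVec (q.1 i) -
            ∑ i ∈ Finset.Iio j, d i q.1 q.2)) from rfl, if_pos hj]
        exact (h1 j hj).symm
      · rw [show (Φ q).1 j = if (j : ℕ) = 0 then
            vmin (d j q.1 q.2) (a + Ms.mulVec q.2 + ∑ i, (Md i).mulVec (q.1 i))
          else vmin (d j q.1 q.2) (vpos (a + Ms.mulVec q.2 + ∑ i, (Md i).mulVec (q.1 i) -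
            ∑ i ∈ Finset.Iio j, d i q.1 q.2)) from rfl, if_neg hj]
        exact (h2 j hj).symm
  refine ⟨p, (hLiq_iff p).2 |> fun _ => (hLiq_iff p).1 hfix, ?_, ?_⟩
  · intro q hq
    have hqfix : Φ q = q := (hLiq_iff q).2 hq
    have hb : l1P (q - p) ≤ c * l1P (q - p) := by
      calc l1P (q - p) = l1P (Φ q - Φ p) := by rw [hqfix, hfix]
        _ ≤ c * l1P (q - p) := hLip q p
    have h0 : l1P (q - p) ≤ 0 := by nlinarith [l1P_nonneg (q - p)]
    exact sub_eq_zero.mp (l1P_eq_zero (le_antisymm h0 (l1P_nonneg _)))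
  · intro x0
    have hbound : ∀ k : ℕ, l1P (Φ^[k] x0 - p) ≤ c ^ k * l1P (x0 - p) := by
      intro k
      have : Φ^[k] p = p := Function.iterate_fixed hfix k
      calc l1P (Φ^[k] x0 - p) = l1P (Φ^[k] x0 - Φ^[k] p) := by rw [this]
        _ ≤ c ^ k * l1P (x0 - p) := hiter k x0 p
    have hgeo : Tendsto (fun k : ℕ => c ^ k * l1P (x0 - p)) atTop (nhds 0) := by
      have := (tendsto_pow_atTop_nhds_zero_of_lt_one hc0 hc1).mul_const (l1P (x0 - p))
      simpa using this
    exact squeeze_zero (fun k => l1P_nonneg _) hbound hgeo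
end
end

section
/- For every solution (r¹,…,r^m,s) of the liquidation value system, one has ‖a‖₁ = 0 if and only if ‖s‖₁ = 0 and ‖rⁱ‖₁ = 0 for all i = 1,…,m. -/
open Matrix Finset Filter

noncomputable section

lemma l1_eq_zero_iff' {n : ℕ} (x : Fin n → ℝ) : l1 x = 0 ↔ ∀ k, x k = 0 := by
  unfold l1
  rw [Finset.sum_eq_zero_iff_of_nonneg (fun k _ => abs_nonneg _)]
  simp [abs_eq_zero]

lemma iio_sum {m : ℕ} (f : Fin m → ℝ) (j : Fin m) :
    ∑ i ∈ Finset.Iio j, f i = ∑ p ∈ Finset.range j.val, (if h : p < m then f ⟨p,h⟩ else 0) := by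
  refine Finset.sum_bij (fun (i : Fin m) _ => (i : ℕ)) ?_ ?_ ?_ ?_
  · intro i hi; simp only [Finset.mem_Iio] at hi; exact Finset.mem_range.mpr hi
  · intro i _ i' _ h; exact Fin.ext h
  · intro p hp
    have hpj : p < j.val := Finset.mem_range.mp hp
    exact ⟨⟨p, lt_trans hpj j.isLt⟩, Finset.mem_Iio.mpr hpj, rfl⟩
  · intro i _; rw [dif_pos i.isLt]

lemma fin_sum' {m : ℕ} (f : Fin m → ℝ) :
    ∑ i, f i = ∑ p ∈ Finset.range m, (if h : p < m then f ⟨p,h⟩ else 0) := by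
  rw [← Fin.sum_univ_eq_sum_range (fun p => if h : p < m then f ⟨p,h⟩ else 0) m]
  exact Finset.sum_congr rfl fun i _ => by rw [dif_pos i.isLt]

lemma min_max_sub_s10 (c dd : ℝ) (h0 : 0 ≤ dd) : min dd (max c 0) = max c 0 - max (c - dd) 0 := by
  rcases le_total c 0 with h | h
  · rw [max_eq_right h, max_eq_right (by linarith), min_eq_right h0]; ring
  · rw [max_eq_left h]
    rcases le_total dd c with h2 | h2
    · rw [min_eq_left h2, max_eq_left (by linarith)]; ring
    · rw [min_eq_right h2, max_eq_right (by linarith)]; ring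

/-- ‖a‖₁ = 0 iff all equities and recoveries have zero ℓ¹-norm, for any solution of the
liquidation value system. -/
theorem l1_a_eq_zero_iff {n m : ℕ} (hn : 0 < n) (hm : 0 < m)
    (a : Fin n → ℝ) (ha : ∀ k, 0 ≤ a k)
    (Ms : Matrix (Fin n) (Fin n) ℝ) (hMs : StrictlyLeftSubstochastic Ms)
    (Md : Fin m → Matrix (Fin n) (Fin n) ℝ) (hMd : ∀ i, StrictlyLeftSubstochastic (Md i))
    (d : Fin m → (Fin m → Fin n → ℝ) → (Fin n → ℝ) → (Fin n → ℝ))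
    (hd : ∀ i r s k, 0 ≤ d i r s k)
    (r : Fin m → Fin n → ℝ) (s : Fin n → ℝ)
    (hsol : LiqSystem a Ms Md d r s) :
    l1 a = 0 ↔ (l1 s = 0 ∧ ∀ i, l1 (r i) = 0) := by
  obtain ⟨h0, hj, hs⟩ := hsol
  have hmv : ∀ (M : Matrix (Fin n) (Fin n) ℝ) (x : Fin n → ℝ) (k : Fin n),
      M.mulVec x k = ∑ l, M k l * x l := by
    intro M x k; simp [Matrix.mulVec, dotProduct]
  set b : Fin n → ℝ := a + Ms.mulVec s + ∑ i, (Md i).mulVec (r i) with hbdef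
  have hbapp : ∀ k, b k = a k + Ms.mulVec s k + ∑ i, (Md i).mulVec (r i) k := by
    intro k; simp [hbdef, Finset.sum_apply]
  have hsapp : ∀ k, s k = max (b k - ∑ i, d i r s k) 0 := by
    intro k
    conv_lhs => rw [hs]
    simp [vpos, hbdef, Finset.sum_apply]
  have hs_nn : ∀ k, 0 ≤ s k := by
    intro k; rw [hsapp k]; exact le_max_right _ _
  have hrne_nn : ∀ j : Fin m, (j:ℕ) ≠ 0 → ∀ k, 0 ≤ r j k := by
    intro j hj0 k
    rw [hj j hj0]
    exact le_min (hd _ _ _ _) (le_max_right _ _)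
  set j0 : Fin m := ⟨0, hm⟩ with hj0def
  have hr0app : ∀ k, r j0 k = min (d j0 r s k) (b k) :=
    fun k => congrFun (h0 j0 rfl) k
  have hMsnn : ∀ k, 0 ≤ Ms.mulVec s k := by
    intro k
    rw [hmv]
    exact Finset.sum_nonneg fun l _ => mul_nonneg (hMs.1 k l) (hs_nn l)
  -- nonnegativity of r j0
  have hr0_nn : ∀ k, 0 ≤ r j0 k := by
    by_contra hcon
    push_neg at hcon
    obtain ⟨k0, hk0⟩ := hcon
    set N : Finset (Fin n) := Finset.univ.filter (fun k => r j0 k < 0) with hNdef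
    have hNmem : ∀ k, k ∈ N ↔ r j0 k < 0 := by
      intro k; simp [hNdef]
    have hNne : N.Nonempty := ⟨k0, (hNmem k0).mpr hk0⟩
    set M := Md j0 with hMdef
    have hstep1 : ∀ k ∈ N, r j0 k = b k := by
      intro k hk
      have hk' := (hNmem k).mp hk
      have := hr0app k
      rcases min_cases (d j0 r s k) (b k) with ⟨h1, _⟩ | ⟨h1, _⟩
      · exfalso; rw [this, h1] at hk'; exact absurd hk' (not_lt.mpr (hd _ _ _ _))
      · rw [this, h1]
    have hstep4 : ∀ k ∈ N, ∑ l ∈ N, M k l * r j0 l ≤ r j0 k := by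
      intro k hk
      have h1 : ∑ l ∈ N, M k l * r j0 l ≤ ∑ l, M k l * r j0 l := by
        refine Finset.sum_le_sum_of_subset_of_nonneg (Finset.subset_univ N) ?_
        intro l _ hl
        have hrl : 0 ≤ r j0 l := not_lt.mp (fun h => hl ((hNmem l).mpr h))
        exact mul_nonneg ((hMd j0).1 k l) hrl
      have h2 : ∑ l, M k l * r j0 l = (M.mulVec (r j0)) k := (hmv M (r j0) k).symm
      have h3 : (M.mulVec (r j0)) k ≤ b k := by
        rw [hbapp k]
        have hsplit := Finset.add_sum_erase Finset.univ
          (fun i => (Md i).mulVec (r i) k) (Finset.mem_univ j0)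
        have hrest : 0 ≤ ∑ i ∈ Finset.univ.erase j0, (Md i).mulVec (r i) k := by
          refine Finset.sum_nonneg fun i hi => ?_
          have hine : (i : ℕ) ≠ 0 := by
            intro h
            exact (Finset.mem_erase.mp hi).1 (Fin.ext h)
          rw [hmv]
          exact Finset.sum_nonneg fun l _ =>
            mul_nonneg ((hMd i).1 k l) (hrne_nn i hine l)
        have := hMsnn k
        have hak := ha k
        nlinarith [hsplit]
      calc ∑ l ∈ N, M k l * r j0 l ≤ ∑ l, M k l * r j0 l := h1
        _ = (M.mulVec (r j0)) k := h2
        _ ≤ b k := h3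
        _ = r j0 k := (hstep1 k hk).symm
    have hsum1 : ∑ k ∈ N, ∑ l ∈ N, M k l * r j0 l ≤ ∑ k ∈ N, r j0 k :=
      Finset.sum_le_sum hstep4
    have hswap : ∑ k ∈ N, ∑ l ∈ N, M k l * r j0 l
        = ∑ l ∈ N, (∑ k ∈ N, M k l) * r j0 l := by
      rw [Finset.sum_comm]
      exact Finset.sum_congr rfl fun l _ => (Finset.sum_mul _ _ _).symm
    have hstep6 : ∀ l ∈ N, r j0 l < (∑ k ∈ N, M k l) * r j0 l := by
      intro l hl
      have hc1 : ∑ k ∈ N, M k l < 1 := by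
        have h1 : ∑ k ∈ N, M k l ≤ ∑ k, M k l :=
          Finset.sum_le_sum_of_subset_of_nonneg (Finset.subset_univ N)
            (fun k _ _ => (hMd j0).1 k l)
        exact lt_of_le_of_lt h1 ((hMd j0).2 l)
      have hrl : r j0 l < 0 := (hNmem l).mp hl
      have := mul_lt_mul_of_neg_right hc1 hrl
      linarith
    have hlt : ∑ l ∈ N, r j0 l < ∑ l ∈ N, (∑ k ∈ N, M k l) * r j0 l :=
      Finset.sum_lt_sum_of_nonempty hNne hstep6
    rw [← hswap] at hlt
    linarith
  have hr_nn : ∀ i k, 0 ≤ r i k := by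
    intro i k
    by_cases hi : (i : ℕ) = 0
    · have : i = j0 := Fin.ext hi
      rw [this]; exact hr0_nn k
    · exact hrne_nn i hi k
  have hb_nn : ∀ k, 0 ≤ b k := by
    intro k
    rw [hbapp k]
    have h1 : 0 ≤ ∑ i, (Md i).mulVec (r i) k := by
      refine Finset.sum_nonneg fun i _ => ?_
      rw [hmv]
      exact Finset.sum_nonneg fun l _ => mul_nonneg ((hMd i).1 k l) (hr_nn i l)
    have := hMsnn k
    have := ha k
    linarith
  -- the key conservation identity
  have key : ∀ k, s k + ∑ j, r j k = b k := by
    intro k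
    set dv : ℕ → ℝ := fun p => if h : p < m then d ⟨p,h⟩ r s k else 0 with hdvdef
    set G : ℕ → ℝ := fun p => max (b k - ∑ i ∈ Finset.range p, dv i) 0 with hGdef
    have claimA : ∀ j : Fin m, r j k = G j.val - G (j.val + 1) := by
      intro j
      have hdvj : dv j.val = d j r s k := by
        simp only [hdvdef, dif_pos j.isLt]
      have hGsucc : G (j.val + 1)
          = max ((b k - ∑ i ∈ Finset.range j.val, dv i) - d j r s k) 0 := by
        simp only [hGdef, Finset.sum_range_succ, hdvj]
        ring_nf
      by_cases hj0' : (j : ℕ) = 0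
      · have hjj : j = j0 := Fin.ext hj0'
        have hG0 : G j.val = max (b k) 0 := by
          simp [hGdef, hj0']
        have hrange0 : ∑ i ∈ Finset.range j.val, dv i = 0 := by
          simp [hj0']
        rw [hjj, hr0app k, ← hjj, hG0, hGsucc, hrange0,
          max_eq_left (hb_nn k)]
        have := min_max_sub_s10 (b k) (d j r s k) (hd _ _ _ _)
        rw [max_eq_left (hb_nn k)] at this
        rw [this]
        ring_nf
      · have hreq : r j k = min (d j r s k)
            (max (b k - ∑ i ∈ Finset.Iio j, d i r s k) 0) := by
          conv_lhs => rw [hj j hj0']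
          simp [vmin, vpos, hbdef, Finset.sum_apply]
        rw [hreq, iio_sum (fun i => d i r s k) j]
        have hconv : ∑ p ∈ Finset.range j.val,
            (if h : p < m then d ⟨p,h⟩ r s k else 0) = ∑ i ∈ Finset.range j.val, dv i := rfl
        rw [hconv]
        rw [min_max_sub_s10 _ _ (hd j r s k), hGsucc]
    have claimC : s k = G m := by
      rw [hsapp k]
      simp only [hGdef]
      rw [fin_sum' (fun i => d i r s k)]
    have sumr : ∑ j, r j k = G 0 - G m := by
      have h1 : ∑ j : Fin m, r j k = ∑ j : Fin m, (G j.val - G (j.val + 1)) :=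
        Finset.sum_congr rfl fun j _ => claimA j
      rw [h1, Fin.sum_univ_eq_sum_range (fun p => G p - G (p + 1)) m,
        Finset.sum_range_sub' G m]
    have hG0 : G 0 = b k := by
      simp [hGdef, max_eq_left (hb_nn k)]
    rw [claimC, sumr, hG0]; ring
  -- global sums
  have total : ∑ k, s k + ∑ i, ∑ l, r i l = ∑ k, b k := by
    have t1 : ∑ k, (s k + ∑ j, r j k) = ∑ k, b k :=
      Finset.sum_congr rfl fun k _ => key k
    rw [Finset.sum_add_distrib, Finset.sum_comm] at t1
    exact t1
  have colsum : ∀ (M : Matrix (Fin n) (Fin n) ℝ) (x : Fin n → ℝ),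
      ∑ k, M.mulVec x k = ∑ l, (∑ k, M k l) * x l := by
    intro M x
    simp only [hmv]
    rw [Finset.sum_comm]
    exact Finset.sum_congr rfl fun l _ => (Finset.sum_mul _ _ _).symm
  constructor
  · intro hla
    have ha0 : ∀ k, a k = 0 := (l1_eq_zero_iff' a).mp hla
    have hsumb : ∑ k, b k = ∑ l, (∑ k, Ms k l) * s l
        + ∑ i, ∑ l, (∑ k, Md i k l) * r i l := by
      have e1 : ∑ k, b k = ∑ k, a k + ∑ k, Ms.mulVec s k
          + ∑ k, ∑ i, (Md i).mulVec (r i) k := by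
        rw [← Finset.sum_add_distrib, ← Finset.sum_add_distrib]
        exact Finset.sum_congr rfl fun k _ => hbapp k
      rw [e1, Finset.sum_comm]
      have e2 : ∑ k, a k = 0 := Finset.sum_eq_zero fun k _ => ha0 k
      rw [e2, colsum Ms s]
      have e3 : ∀ i : Fin m, ∑ k, (Md i).mulVec (r i) k
          = ∑ l, (∑ k, Md i k l) * r i l := fun i => colsum (Md i) (r i)
      rw [Finset.sum_congr rfl fun i _ => e3 i]
      ring
    set X : ℝ := ∑ l, (1 - ∑ k, Ms k l) * s l with hXdef
    set Y : ℝ := ∑ i, ∑ l, (1 - ∑ k, Md i k l) * r i l with hYdef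
    have hXterm_nn : ∀ l, 0 ≤ (1 - ∑ k, Ms k l) * s l := by
      intro l
      exact mul_nonneg (by linarith [hMs.2 l]) (hs_nn l)
    have hYterm_nn : ∀ (i : Fin m) (l : Fin n), 0 ≤ (1 - ∑ k, Md i k l) * r i l := by
      intro i l
      exact mul_nonneg (by linarith [(hMd i).2 l]) (hr_nn i l)
    have hX_nn : 0 ≤ X := Finset.sum_nonneg fun l _ => hXterm_nn l
    have hY_nn : 0 ≤ Y := Finset.sum_nonneg fun i _ =>
      Finset.sum_nonneg fun l _ => hYterm_nn i l
    have hXY : X + Y = 0 := by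
      have eX : X = ∑ l, s l - ∑ l, (∑ k, Ms k l) * s l := by
        rw [hXdef, ← Finset.sum_sub_distrib]
        exact Finset.sum_congr rfl fun l _ => by ring
      have eY : Y = ∑ i, ∑ l, r i l - ∑ i, ∑ l, (∑ k, Md i k l) * r i l := by
        rw [hYdef, ← Finset.sum_sub_distrib]
        refine Finset.sum_congr rfl fun i _ => ?_
        rw [← Finset.sum_sub_distrib]
        exact Finset.sum_congr rfl fun l _ => by ring
      rw [hsumb] at total
      rw [eX, eY]
      linarith
    have hX0 : X = 0 := by linarith
    have hY0 : Y = 0 := by linarith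
    constructor
    · rw [l1_eq_zero_iff']
      intro l
      have := (Finset.sum_eq_zero_iff_of_nonneg (fun l _ => hXterm_nn l)).mp hX0
        l (Finset.mem_univ l)
      rcases mul_eq_zero.mp this with h | h
      · exfalso; have := hMs.2 l; linarith
      · exact h
    · intro i
      rw [l1_eq_zero_iff']
      intro l
      have hYi : ∑ l, (1 - ∑ k, Md i k l) * r i l = 0 :=
        (Finset.sum_eq_zero_iff_of_nonneg
          (fun i _ => Finset.sum_nonneg fun l _ => hYterm_nn i l)).mp hY0
          i (Finset.mem_univ i)
      have := (Finset.sum_eq_zero_iff_of_nonneg (fun l _ => hYterm_nn i l)).mp hYi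
        l (Finset.mem_univ l)
      rcases mul_eq_zero.mp this with h | h
      · exfalso; have := (hMd i).2 l; linarith
      · exact h
  · rintro ⟨hls, hlr⟩
    have hs0 : ∀ k, s k = 0 := (l1_eq_zero_iff' s).mp hls
    have hr0 : ∀ i k, r i k = 0 := fun i => (l1_eq_zero_iff' (r i)).mp (hlr i)
    rw [l1_eq_zero_iff']
    intro k
    have hbk : b k = a k := by
      rw [hbapp k, hmv]
      have e1 : ∑ l, Ms k l * s l = 0 := Finset.sum_eq_zero fun l _ => by
        rw [hs0 l, mul_zero]
      have e2 : ∑ i, (Md i).mulVec (r i) k = 0 := Finset.sum_eq_zero fun i _ => by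
        rw [hmv]
        exact Finset.sum_eq_zero fun l _ => by rw [hr0 i l, mul_zero]
      rw [e1, e2]; ring
    have hkey := key k
    rw [hbk, hs0 k] at hkey
    have : ∑ j, r j k = 0 := Finset.sum_eq_zero fun j _ => hr0 j k
    rw [this] at hkey
    linarith
end
end

section
/- Let m ≥ 1 and let ψ¹,…,ψ^m : ℝ → [0,∞) be monotonically increasing functions such that for all z¹ ≥ z² in ℝ one has z¹ − z² ≥ Σ_{i=1}^m (ψⁱ(z¹) − ψⁱ(z²)). Then for all x, y¹, y² ∈ ℝ: |y¹ − y²| = |min{ψ¹(y¹), x + y¹} − min{ψ¹(y²), x + y²}| + Σ_{j=1}^{m−1} |min{ψ^{j+1}(y¹), (x + y¹ − Σ_{i=1}^{j} ψⁱ(y¹))⁺} − min{ψ^{j+1}(y²), (x + y² − Σ_{i=1}^{j} ψⁱ(y²))⁺}| + |(x + y¹ − Σ_{i=1}^{m} ψⁱ(y¹))⁺ − (x + y² − Σ_{i=1}^{m} ψⁱ(y²))⁺|. -/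
open Finset

private lemma minmax_aux (a t : ℝ) (ha : 0 ≤ a) :
    min a (max t 0) + max (t - a) 0 = max t 0 := by
  rcases le_total t 0 with h | h
  · rw [max_eq_right h, max_eq_right (by linarith), min_eq_right ha]
    ring
  · rw [max_eq_left h]
    rcases le_total a t with h2 | h2
    · rw [min_eq_left h2, max_eq_left (by linarith)]; ring
    · rw [min_eq_right h2, max_eq_right (by linarith)]; ring

private lemma tele_aux (m : ℕ) (hm : 1 ≤ m) (psi : ℕ → ℝ → ℝ)
    (hnn : ∀ i ∈ Finset.Icc 1 m, ∀ z : ℝ, 0 ≤ psi i z) (x y : ℝ) :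
    min (psi 1 y) (x + y) +
      (∑ j ∈ Finset.Icc 1 (m - 1),
        min (psi (j + 1) y) (max (x + y - ∑ i ∈ Finset.Icc 1 j, psi i y) 0)) +
      max (x + y - ∑ i ∈ Finset.Icc 1 m, psi i y) 0 = x + y := by
  induction m with
  | zero => omega
  | succ k ih =>
    rcases Nat.eq_zero_or_pos k with rfl | hk
    · simp only [Nat.add_sub_cancel, Finset.Icc_self, Finset.sum_singleton]
      rw [show Finset.Icc 1 0 = (∅ : Finset ℕ) from Finset.Icc_eq_empty (by omega),
        Finset.sum_empty]
      rcases le_total (psi 1 y) (x + y) with h | h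
      · rw [min_eq_left h, max_eq_left (by linarith)]; ring
      · rw [min_eq_right h, max_eq_right (by linarith)]; ring
    · obtain ⟨k', rfl⟩ : ∃ k', k = k' + 1 := ⟨k - 1, (Nat.succ_pred_eq_of_pos hk).symm⟩
      have hnn' : ∀ i ∈ Finset.Icc 1 (k' + 1), ∀ z : ℝ, 0 ≤ psi i z := fun i hi =>
        hnn i (Finset.Icc_subset_Icc_right (by omega) hi)
      have ih' := ih (by omega) hnn'
      simp only [Nat.add_sub_cancel] at ih' ⊢
      rw [Finset.sum_Icc_succ_top (show (1:ℕ) ≤ k' + 1 by omega),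
        Finset.sum_Icc_succ_top (show (1:ℕ) ≤ k' + 1 + 1 by omega)]
      have ha : 0 ≤ psi (k' + 1 + 1) y :=
        hnn (k' + 1 + 1) (Finset.mem_Icc.2 ⟨by omega, le_rfl⟩) y
      have key := minmax_aux (psi (k' + 1 + 1) y)
        (x + y - ∑ i ∈ Finset.Icc 1 (k' + 1), psi i y) ha
      have hrw : x + y - (∑ i ∈ Finset.Icc 1 (k' + 1), psi i y + psi (k' + 1 + 1) y)
          = (x + y - ∑ i ∈ Finset.Icc 1 (k' + 1), psi i y) - psi (k' + 1 + 1) y := by ring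
      rw [hrw]
      linarith [ih', key]

private lemma main_aux (m : ℕ) (hm : 1 ≤ m)
    (psi : ℕ → ℝ → ℝ)
    (hpsi_nonneg : ∀ i ∈ Finset.Icc 1 m, ∀ z : ℝ, 0 ≤ psi i z)
    (hpsi_mono : ∀ i ∈ Finset.Icc 1 m, Monotone (psi i))
    (hpsi_lip : ∀ z1 z2 : ℝ, z2 ≤ z1 →
      ∑ i ∈ Finset.Icc 1 m, (psi i z1 - psi i z2) ≤ z1 - z2)
    (x y1 y2 : ℝ) (h : y2 ≤ y1) :
    |y1 - y2| =
      |min (psi 1 y1) (x + y1) - min (psi 1 y2) (x + y2)| +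
      (∑ j ∈ Finset.Icc 1 (m - 1),
        |min (psi (j + 1) y1) (max (x + y1 - ∑ i ∈ Finset.Icc 1 j, psi i y1) 0) -
         min (psi (j + 1) y2) (max (x + y2 - ∑ i ∈ Finset.Icc 1 j, psi i y2) 0)|) +
      |max (x + y1 - ∑ i ∈ Finset.Icc 1 m, psi i y1) 0 -
       max (x + y2 - ∑ i ∈ Finset.Icc 1 m, psi i y2) 0| := by
  have hS : ∀ j, j ≤ m →
      (∑ i ∈ Finset.Icc 1 j, psi i y1) - (∑ i ∈ Finset.Icc 1 j, psi i y2) ≤ y1 - y2 := by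
    intro j hj
    have h1 : ∑ i ∈ Finset.Icc 1 j, (psi i y1 - psi i y2)
        ≤ ∑ i ∈ Finset.Icc 1 m, (psi i y1 - psi i y2) :=
      Finset.sum_le_sum_of_subset_of_nonneg (Finset.Icc_subset_Icc_right hj)
        (fun i hi _ => sub_nonneg.2 (hpsi_mono i hi h))
    rw [← Finset.sum_sub_distrib]
    exact h1.trans (hpsi_lip y1 y2 h)
  have hRmax : ∀ j, j ≤ m →
      max (x + y2 - ∑ i ∈ Finset.Icc 1 j, psi i y2) 0
        ≤ max (x + y1 - ∑ i ∈ Finset.Icc 1 j, psi i y1) 0 := by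
    intro j hj
    exact max_le_max (by have := hS j hj; linarith) le_rfl
  have habs1 : |min (psi 1 y1) (x + y1) - min (psi 1 y2) (x + y2)|
      = min (psi 1 y1) (x + y1) - min (psi 1 y2) (x + y2) :=
    abs_of_nonneg (sub_nonneg.2 (min_le_min
      (hpsi_mono 1 (Finset.mem_Icc.2 ⟨le_rfl, hm⟩) h) (by linarith)))
  have habs2 : ∀ j ∈ Finset.Icc 1 (m - 1),
      |min (psi (j + 1) y1) (max (x + y1 - ∑ i ∈ Finset.Icc 1 j, psi i y1) 0) -
       min (psi (j + 1) y2) (max (x + y2 - ∑ i ∈ Finset.Icc 1 j, psi i y2) 0)|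
      = min (psi (j + 1) y1) (max (x + y1 - ∑ i ∈ Finset.Icc 1 j, psi i y1) 0) -
        min (psi (j + 1) y2) (max (x + y2 - ∑ i ∈ Finset.Icc 1 j, psi i y2) 0) := by
    intro j hj
    obtain ⟨hj1, hj2⟩ := Finset.mem_Icc.1 hj
    have hjm : j ≤ m := hj2.trans (Nat.sub_le m 1)
    have hj1m : j + 1 ≤ m := by omega
    exact abs_of_nonneg (sub_nonneg.2 (min_le_min
      (hpsi_mono (j + 1) (Finset.mem_Icc.2 ⟨by omega, hj1m⟩) h) (hRmax j hjm)))
  have habs3 : |max (x + y1 - ∑ i ∈ Finset.Icc 1 m, psi i y1) 0 -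
       max (x + y2 - ∑ i ∈ Finset.Icc 1 m, psi i y2) 0|
      = max (x + y1 - ∑ i ∈ Finset.Icc 1 m, psi i y1) 0 -
        max (x + y2 - ∑ i ∈ Finset.Icc 1 m, psi i y2) 0 :=
    abs_of_nonneg (sub_nonneg.2 (hRmax m le_rfl))
  rw [habs1, habs3, Finset.sum_congr rfl habs2, Finset.sum_sub_distrib]
  have t1 := tele_aux m hm psi hpsi_nonneg x y1
  have t2 := tele_aux m hm psi hpsi_nonneg x y2
  rw [abs_of_nonneg (sub_nonneg.2 h)]
  linarith [t1, t2]

/-- The key identity for the contraction argument: for monotone nonnegative ψ¹,…,ψ^m with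
Σᵢ(ψⁱ(z¹) − ψⁱ(z²)) ≤ z¹ − z² for all z¹ ≥ z², the sum of the absolute differences of the
right-hand sides of the liquidation value equations equals |y¹ − y²|. -/
theorem seniority_abs_diff_identity (m : ℕ) (hm : 1 ≤ m)
    (psi : ℕ → ℝ → ℝ)
    (hpsi_nonneg : ∀ i ∈ Finset.Icc 1 m, ∀ z : ℝ, 0 ≤ psi i z)
    (hpsi_mono : ∀ i ∈ Finset.Icc 1 m, Monotone (psi i))
    (hpsi_lip : ∀ z1 z2 : ℝ, z2 ≤ z1 →
      ∑ i ∈ Finset.Icc 1 m, (psi i z1 - psi i z2) ≤ z1 - z2)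
    (x y1 y2 : ℝ) :
    |y1 - y2| =
      |min (psi 1 y1) (x + y1) - min (psi 1 y2) (x + y2)| +
      (∑ j ∈ Finset.Icc 1 (m - 1),
        |min (psi (j + 1) y1) (max (x + y1 - ∑ i ∈ Finset.Icc 1 j, psi i y1) 0) -
         min (psi (j + 1) y2) (max (x + y2 - ∑ i ∈ Finset.Icc 1 j, psi i y2) 0)|) +
      |max (x + y1 - ∑ i ∈ Finset.Icc 1 m, psi i y1) 0 -
       max (x + y2 - ∑ i ∈ Finset.Icc 1 m, psi i y2) 0| := by
  rcases le_total y2 y1 with h | h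
  · exact main_aux m hm psi hpsi_nonneg hpsi_mono hpsi_lip x y1 y2 h
  · have key := main_aux m hm psi hpsi_nonneg hpsi_mono hpsi_lip x y2 y1 h
    have e0 : |y1 - y2| = |y2 - y1| := abs_sub_comm _ _
    have e1 : |min (psi 1 y2) (x + y2) - min (psi 1 y1) (x + y1)|
        = |min (psi 1 y1) (x + y1) - min (psi 1 y2) (x + y2)| := abs_sub_comm _ _
    have e3 : |max (x + y2 - ∑ i ∈ Finset.Icc 1 m, psi i y2) 0 -
         max (x + y1 - ∑ i ∈ Finset.Icc 1 m, psi i y1) 0|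
        = |max (x + y1 - ∑ i ∈ Finset.Icc 1 m, psi i y1) 0 -
           max (x + y2 - ∑ i ∈ Finset.Icc 1 m, psi i y2) 0| := abs_sub_comm _ _
    have e2 : (∑ j ∈ Finset.Icc 1 (m - 1),
        |min (psi (j + 1) y2) (max (x + y2 - ∑ i ∈ Finset.Icc 1 j, psi i y2) 0) -
         min (psi (j + 1) y1) (max (x + y1 - ∑ i ∈ Finset.Icc 1 j, psi i y1) 0)|)
        = (∑ j ∈ Finset.Icc 1 (m - 1),
        |min (psi (j + 1) y1) (max (x + y1 - ∑ i ∈ Finset.Icc 1 j, psi i y1) 0) -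
         min (psi (j + 1) y2) (max (x + y2 - ∑ i ∈ Finset.Icc 1 j, psi i y2) 0)|) :=
      Finset.sum_congr rfl (fun j _ => abs_sub_comm _ _)
    linarith [key, e0, e1, e2, e3]
end
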